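/- arXiv:2111.08294 — 15 statements merged into one kernel-verified Lean document; each statement's English description precedes it below -/
import Mathlib

section
/- Assume that 𝒜 is convex and closed, 𝒫 is convex and closed, V₀ is convex and lower semicontinuous, V₁ is superlinear (positively homogeneous: V₁(λx) = λV₁(x) for all λ ≥ 0 and all x, and superadditive: V₁(x+y) ≥ V₁(x) + V₁(y) for all x, y) and upper semicontinuous, and that ℒ is a linear subspace of ℝ^N. Then the set 𝒞 is closed in 𝒳 × ℝ, the risk measure ρ is lower semicontinuous, and for every X ∈ 𝒳 with ρ(X) ∈ ℝ the infimum defining ρ(X) is attained: there exists x ∈ 𝒫 with X + V₁(x) ∈ 𝒜 and V₀(x) = ρ(X). -/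
open Topology Filter Set Pointwise

noncomputable section

/-- The asymptotic cone `C^∞` of a set `C` in a real topological vector space: the set of all
limits `z` of nets `l_α • c_α` with `c_α ∈ C`, `l_α ≥ 0`, `l_α → 0`, expressed via the standard
neighborhood characterization of net convergence. -/
def asymCone {E : Type*} [AddCommMonoid E] [SMul ℝ E] [TopologicalSpace E] (C : Set E) :
    Set E :=
  {z | ∀ U ∈ 𝓝 z, ∀ ε : ℝ, 0 < ε → ∃ c ∈ C, ∃ l : ℝ, 0 ≤ l ∧ l < ε ∧ l • c ∈ U}

/-- Epigraph of a real-valued function. -/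
def epigraph {E : Type*} (f : E → ℝ) : Set (E × ℝ) := {p | f p.1 ≤ p.2}

/-- The risk measure `ρ` associated to `(A, P, V₀, V₁)`, valued in the extended reals
(`sInf ∅ = ⊤`). -/
def riskM {X : Type*} [AddCommMonoid X] {N : ℕ} (A : Set X) (P : Set (Fin N → ℝ))
    (V₀ : (Fin N → ℝ) → ℝ) (V₁ : (Fin N → ℝ) → X) (Z : X) : EReal :=
  sInf ((fun x => ((V₀ x : ℝ) : EReal)) '' {x | x ∈ P ∧ Z + V₁ x ∈ A})

/-- The set `ℒ = {x ∈ 𝒫^∞ : V₀^∞(x) ≤ 0, V₁(x) ∈ 𝒜^∞}`.  Here `V₀^∞(x) ≤ 0` is expressed as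
`(x, 0)` belonging to the asymptotic cone of the epigraph of `V₀`, which is by definition the
epigraph of `V₀^∞`. -/
def Lset {X : Type*} [AddCommMonoid X] [SMul ℝ X] [TopologicalSpace X] {N : ℕ}
    (A : Set X) (P : Set (Fin N → ℝ)) (V₀ : (Fin N → ℝ) → ℝ) (V₁ : (Fin N → ℝ) → X) :
    Set (Fin N → ℝ) :=
  {x | x ∈ asymCone P ∧ (x, (0 : ℝ)) ∈ asymCone (epigraph V₀) ∧ V₁ x ∈ asymCone A}

/-- Upper semicontinuity of the liquidation rule `V₁` relative to the ordering cone `Xp`: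
for every `x` and every neighborhood `U` of `V₁ x` there is a neighborhood `W` of `x` with
`V₁(W) ⊆ U - Xp`. -/
def USCV1 {X : Type*} [AddCommGroup X] [TopologicalSpace X] {N : ℕ}
    (Xp : Set X) (V₁ : (Fin N → ℝ) → X) : Prop :=
  ∀ x : Fin N → ℝ, ∀ U ∈ 𝓝 (V₁ x), ∃ W ∈ 𝓝 x, ∀ y ∈ W, ∃ u ∈ U, ∃ p ∈ Xp, V₁ y = u - p

lemma exists_nhds_add {X : Type*} [AddCommGroup X] [TopologicalSpace X]
    [IsTopologicalAddGroup X] (a b : X) {V : Set X} (hV : V ∈ 𝓝 (a + b)) :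
    ∃ Va ∈ 𝓝 a, ∃ Vb ∈ 𝓝 b, ∀ x ∈ Va, ∀ y ∈ Vb, x + y ∈ V := by
  have h : ((fun p : X × X => p.1 + p.2) ⁻¹' V) ∈ 𝓝 (a, b) :=
    (continuous_add.tendsto (a, b)) hV
  rw [nhds_prod_eq] at h
  obtain ⟨Va, hVa, Vb, hVb, hsub⟩ := Filter.mem_prod_iff.mp h
  exact ⟨Va, hVa, Vb, hVb, fun x hx y hy => hsub (Set.mk_mem_prod hx hy)⟩

lemma exists_nhds_smul {X : Type*} [AddCommGroup X] [Module ℝ X] [TopologicalSpace X]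
    [ContinuousSMul ℝ X] (c : ℝ) (a : X) {V : Set X} (hV : V ∈ 𝓝 (c • a)) :
    ∃ δ > (0:ℝ), ∃ Va ∈ 𝓝 a, ∀ t : ℝ, |t - c| < δ → ∀ y ∈ Va, t • y ∈ V := by
  have h : ((fun p : ℝ × X => p.1 • p.2) ⁻¹' V) ∈ 𝓝 (c, a) :=
    (continuous_smul.tendsto (c, a)) hV
  rw [nhds_prod_eq] at h
  obtain ⟨T, hT, Va, hVa, hsub⟩ := Filter.mem_prod_iff.mp h
  obtain ⟨δ, hδ, hball⟩ := Metric.mem_nhds_iff.mp hT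
  refine ⟨δ, hδ, Va, hVa, fun t ht y hy => ?_⟩
  have : t ∈ T := hball (by simpa [Real.dist_eq] using ht)
  exact hsub (Set.mk_mem_prod this hy)

lemma add_mem_of_asymCone {E : Type*} [AddCommGroup E] [Module ℝ E] [TopologicalSpace E]
    [IsTopologicalAddGroup E] [ContinuousSMul ℝ E] {C : Set E} (hconv : Convex ℝ C)
    (hcl : IsClosed C) {a z : E} (ha : a ∈ C) (hz : z ∈ asymCone C) : a + z ∈ C := by
  rw [← hcl.closure_eq]
  rw [mem_closure_iff_nhds]
  intro V hV
  have hg : Continuous fun q : E × ℝ => a + q.1 - q.2 • a := by continuity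
  have h0 : (a + z - (0:ℝ) • a) = a + z := by simp
  have h : ((fun q : E × ℝ => a + q.1 - q.2 • a) ⁻¹' V) ∈ 𝓝 (z, (0:ℝ)) := by
    apply hg.tendsto (z, (0:ℝ))
    rw [h0]; exact hV
  rw [nhds_prod_eq] at h
  obtain ⟨U, hU, T, hT, hsub⟩ := Filter.mem_prod_iff.mp h
  obtain ⟨δ, hδ, hball⟩ := Metric.mem_nhds_iff.mp hT
  obtain ⟨c, hc, l, hl0, hlδ, hlc⟩ := hz U hU (min δ 1) (lt_min hδ one_pos)
  have hlδ' : l < δ := lt_of_lt_of_le hlδ (min_le_left _ _)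
  have hl1 : l ≤ 1 := le_of_lt (lt_of_lt_of_le hlδ (min_le_right _ _))
  have hmem : a + l • c - l • a ∈ V := hsub (Set.mk_mem_prod hlc (hball (by
    simpa [Real.dist_eq, abs_of_nonneg hl0] using hlδ')))
  have hCmem : a + l • c - l • a ∈ C := by
    have := hconv ha hc (a := 1 - l) (b := l) (by linarith) hl0 (by ring)
    have heq : (1 - l) • a + l • c = a + l • c - l • a := by
      rw [sub_smul, one_smul]; abel
    rwa [heq] at this
  exact ⟨_, hmem, hCmem⟩

lemma isClosed_epigraph' {E : Type*} [TopologicalSpace E] {f : E → ℝ}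
    (hf : LowerSemicontinuous f) : IsClosed (epigraph f) := by
  rw [← isOpen_compl_iff, isOpen_iff_mem_nhds]
  rintro ⟨x, t⟩ hp
  simp only [epigraph, Set.mem_compl_iff, Set.mem_setOf_eq, not_le] at hp
  obtain ⟨y, hy1, hy2⟩ := exists_between hp
  have h1 : {u | y < f u} ∈ 𝓝 x := hf x y hy2
  have h2 : Set.Iio y ∈ 𝓝 t := Iio_mem_nhds hy1
  have := Filter.prod_mem_prod h1 h2
  rw [← nhds_prod_eq] at this
  apply Filter.mem_of_superset this
  rintro ⟨u, s⟩ ⟨hu, hs⟩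
  simp only [epigraph, Set.mem_compl_iff, Set.mem_setOf_eq, not_le]
  exact lt_of_lt_of_le hs (le_of_lt hu)

lemma convex_epigraph' {E : Type*} [AddCommGroup E] [Module ℝ E] {f : E → ℝ}
    (hf : ConvexOn ℝ Set.univ f) : Convex ℝ (epigraph f) := by
  intro p hp q hq a b ha hb hab
  have h := hf.2 (Set.mem_univ p.1) (Set.mem_univ q.1) ha hb hab
  simp only [epigraph, Set.mem_setOf_eq] at *
  calc f (a • p + b • q).1 = f (a • p.1 + b • q.1) := rfl
    _ ≤ a * f p.1 + b * f q.1 := h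
    _ ≤ a * p.2 + b * q.2 := by
        have := mul_le_mul_of_nonneg_left hp ha
        have := mul_le_mul_of_nonneg_left hq hb
        linarith

theorem stmt0
    {X : Type*} [AddCommGroup X] [Module ℝ X] [TopologicalSpace X]
    [IsTopologicalAddGroup X] [ContinuousSMul ℝ X]
    (Xp : Set X) (hXp_cone : ∀ c : ℝ, 0 ≤ c → ∀ z ∈ Xp, c • z ∈ Xp)
    (hXp_conv : Convex ℝ Xp)
    {N : ℕ} (hN : 1 ≤ N)
    (P : Set (Fin N → ℝ)) (hP0 : (0 : Fin N → ℝ) ∈ P)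
    (V₀ : (Fin N → ℝ) → ℝ) (hV₀0 : V₀ 0 = 0) (hV₀sp : ∀ x, -V₀ (-x) ≤ V₀ x)
    (V₁ : (Fin N → ℝ) → X) (hV₁0 : V₁ 0 = 0) (hV₁sp : ∀ x, -V₁ (-x) - V₁ x ∈ Xp)
    (A : Set X) (hA0 : (0 : X) ∈ A) (hAmono : ∀ a ∈ A, ∀ p ∈ Xp, a + p ∈ A)
    (hAconv : Convex ℝ A) (hAcl : IsClosed A)
    (hPconv : Convex ℝ P) (hPcl : IsClosed P)
    (hV₀conv : ConvexOn ℝ Set.univ V₀) (hV₀lsc : LowerSemicontinuous V₀)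
    (hV₁hom : ∀ c : ℝ, 0 ≤ c → ∀ x, V₁ (c • x) = c • V₁ x)
    (hV₁super : ∀ x y, V₁ (x + y) - (V₁ x + V₁ y) ∈ Xp)
    (hV₁usc : USCV1 Xp V₁)
    (hLlin : ∃ S : Submodule ℝ (Fin N → ℝ), (S : Set (Fin N → ℝ)) = Lset A P V₀ V₁) :
    IsClosed {p : X × ℝ | ∃ x ∈ P, V₀ x ≤ p.2 ∧ p.1 + V₁ x ∈ A} ∧
    LowerSemicontinuous (riskM A P V₀ V₁) ∧
    ∀ Z : X, riskM A P V₀ V₁ Z ≠ ⊥ → riskM A P V₀ V₁ Z ≠ ⊤ →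
      ∃ x ∈ P, Z + V₁ x ∈ A ∧ ((V₀ x : ℝ) : EReal) = riskM A P V₀ V₁ Z := by
  classical
  set Cs : Set (X × ℝ) := {p : X × ℝ | ∃ x ∈ P, V₀ x ≤ p.2 ∧ p.1 + V₁ x ∈ A} with hCsdef
  -- translation of witnesses by elements of ℒ
  have htrans : ∀ (Z' : X) (m' : ℝ) (x : Fin N → ℝ), x ∈ P → V₀ x ≤ m' → Z' + V₁ x ∈ A →
      ∀ d ∈ Lset A P V₀ V₁, x + d ∈ P ∧ V₀ (x + d) ≤ m' ∧ Z' + V₁ (x + d) ∈ A := by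
    intro Z' m' x hxP hxV hxA d hd
    obtain ⟨hdP, hdV, hdA⟩ := hd
    refine ⟨add_mem_of_asymCone hPconv hPcl hxP hdP, ?_, ?_⟩
    · have hepi : (x, V₀ x) + (d, (0:ℝ)) ∈ epigraph V₀ :=
        add_mem_of_asymCone (convex_epigraph' hV₀conv) (isClosed_epigraph' hV₀lsc)
          (le_refl (V₀ x)) hdV
      have h2 : V₀ (x + d) ≤ V₀ x := by
        simpa [epigraph, Prod.mk_add_mk] using hepi
      linarith
    · have h1 : (Z' + V₁ x) + V₁ d ∈ A := add_mem_of_asymCone hAconv hAcl hxA hdA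
      have h2 : ((Z' + V₁ x) + V₁ d) + (V₁ (x + d) - (V₁ x + V₁ d)) ∈ A :=
        hAmono _ h1 _ (hV₁super x d)
      have h3 : ((Z' + V₁ x) + V₁ d) + (V₁ (x + d) - (V₁ x + V₁ d)) = Z' + V₁ (x + d) := by
        abel
      rwa [h3] at h2
  obtain ⟨S, hS⟩ := hLlin
  obtain ⟨S', hcompl⟩ := Submodule.exists_isCompl S
  -- choice of witnesses lying in the complement S'
  have hwx : ∀ p : X × ℝ, ∃ x : Fin N → ℝ,
      p ∈ Cs → x ∈ P ∧ V₀ x ≤ p.2 ∧ p.1 + V₁ x ∈ A ∧ x ∈ S' := by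
    intro p
    by_cases hp : p ∈ Cs
    · obtain ⟨x, hxP, hxV, hxA⟩ := hp
      have hx' : x ∈ S ⊔ S' := by rw [hcompl.sup_eq_top]; exact Submodule.mem_top
      obtain ⟨s, hs, t, ht, hst⟩ := Submodule.mem_sup.mp hx'
      have hdL : -s ∈ Lset A P V₀ V₁ := by
        rw [← hS]; exact S.neg_mem hs
      have h := htrans p.1 p.2 x hxP hxV hxA (-s) hdL
      have hxt : x + -s = t := by rw [← hst]; abel
      rw [hxt] at h
      exact ⟨t, fun _ => ⟨h.1, h.2.1, h.2.2, ht⟩⟩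
    · exact ⟨0, fun h => absurd h hp⟩
  choose w hwspec using hwx
  have hC : IsClosed Cs := by
    rw [isClosed_iff_clusterPt]
    intro zm hzm
    haveI : (𝓝 zm ⊓ 𝓟 Cs).NeBot := hzm
    set G : Ultrafilter (X × ℝ) := Ultrafilter.of (𝓝 zm ⊓ 𝓟 Cs) with hGdef
    have hGle : (G : Filter (X × ℝ)) ≤ 𝓝 zm ⊓ 𝓟 Cs := Ultrafilter.of_le _
    have hGn : (G : Filter (X × ℝ)) ≤ 𝓝 zm := hGle.trans inf_le_left
    have hGC : Cs ∈ (G : Filter (X × ℝ)) := le_principal_iff.mp (hGle.trans inf_le_right)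
    set H : Ultrafilter (Fin N → ℝ) := G.map w with hHdef
    have hHcoe : (H : Filter (Fin N → ℝ)) = Filter.map w (G : Filter (X × ℝ)) := rfl
    by_cases hbd : ∃ R : ℝ, {x : Fin N → ℝ | ‖x‖ ≤ R} ∈ H
    · -- bounded case : the witnesses cluster
      obtain ⟨R, hR⟩ := hbd
      have hball : {x : Fin N → ℝ | ‖x‖ ≤ R} = Metric.closedBall 0 R := by
        ext x; simp [Metric.mem_closedBall, dist_zero_right]
      obtain ⟨x, -, hHx⟩ := isCompact_iff_ultrafilter_le_nhds.mp
        (isCompact_closedBall (0 : Fin N → ℝ) R) H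
        (le_principal_iff.mpr (Ultrafilter.mem_coe.mpr (hball ▸ hR)))
      have hGw : ∀ {T : Set (Fin N → ℝ)}, T ∈ 𝓝 x →
          {p : X × ℝ | w p ∈ T} ∈ (G : Filter (X × ℝ)) := by
        intro T hT
        have h1 : T ∈ (H : Filter (Fin N → ℝ)) := hHx hT
        rw [hHcoe, Filter.mem_map] at h1
        exact h1
      have hxP : x ∈ P := by
        have h1 : {p : X × ℝ | w p ∈ P} ∈ (G : Filter (X × ℝ)) :=
          Filter.mem_of_superset hGC (fun p hp => (hwspec p hp).1)
        have h2 : P ∈ (H : Filter (Fin N → ℝ)) := by rw [hHcoe, Filter.mem_map]; exact h1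
        have h3 : ClusterPt x (𝓟 P) :=
          Filter.neBot_of_le (le_inf hHx (le_principal_iff.mpr h2))
        rw [← hPcl.closure_eq]
        exact mem_closure_iff_clusterPt.mpr h3
      have hxV : V₀ x ≤ zm.2 := by
        by_contra hlt
        push_neg at hlt
        obtain ⟨y, hy1, hy2⟩ := exists_between hlt
        have h1 : {p : X × ℝ | y < V₀ (w p)} ∈ (G : Filter (X × ℝ)) :=
          hGw (hV₀lsc x y hy2)
        have h2 : {p : X × ℝ | p.2 < y} ∈ (G : Filter (X × ℝ)) :=
          hGn ((continuous_snd.tendsto zm) (Iio_mem_nhds hy1))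
        obtain ⟨p, ⟨⟨hp1, hp2⟩, hp3⟩⟩ :=
          Filter.nonempty_of_mem (Filter.inter_mem (Filter.inter_mem h1 h2) hGC)
        have h4 := (hwspec p hp3).2.1
        simp only [Set.mem_setOf_eq] at hp1 hp2
        linarith
      have hxA : zm.1 + V₁ x ∈ A := by
        rw [← hAcl.closure_eq, mem_closure_iff_nhds]
        intro V hV
        obtain ⟨Va, hVa, Vb, hVb, hadd⟩ := exists_nhds_add zm.1 (V₁ x) hV
        obtain ⟨W, hW, husc⟩ := hV₁usc x Vb hVb
        have h1 : {p : X × ℝ | p.1 ∈ Va} ∈ (G : Filter (X × ℝ)) :=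
          hGn ((continuous_fst.tendsto zm) hVa)
        have h2 : {p : X × ℝ | w p ∈ W} ∈ (G : Filter (X × ℝ)) := hGw hW
        obtain ⟨p, ⟨⟨hp1, hp2⟩, hp3⟩⟩ :=
          Filter.nonempty_of_mem (Filter.inter_mem (Filter.inter_mem h1 h2) hGC)
        simp only [Set.mem_setOf_eq] at hp1 hp2
        obtain ⟨u, hu, q, hq, heq⟩ := husc (w p) hp2
        have hA1 : p.1 + V₁ (w p) ∈ A := (hwspec p hp3).2.2.1
        have hA2 : (p.1 + V₁ (w p)) + q ∈ A := hAmono _ hA1 _ hq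
        have h3 : (p.1 + V₁ (w p)) + q = p.1 + u := by rw [heq]; abel
        rw [h3] at hA2
        exact ⟨p.1 + u, hadd _ hp1 _ hu, hA2⟩
      exact ⟨x, hxP, hxV, hxA⟩
    · -- unbounded case : contradiction via the linearity of ℒ
      push_neg at hbd
      exfalso
      have hGnorm : ∀ R : ℝ, {p : X × ℝ | R < ‖w p‖} ∈ (G : Filter (X × ℝ)) := by
        intro R
        have h1 : {x : Fin N → ℝ | ‖x‖ ≤ R}ᶜ ∈ H :=
          Ultrafilter.compl_mem_iff_notMem.mpr (hbd R)
        have h2 : {x : Fin N → ℝ | ‖x‖ ≤ R}ᶜ = {x : Fin N → ℝ | R < ‖x‖} := by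
          ext u; simp [not_le]
        rw [h2] at h1
        have h3 : {x : Fin N → ℝ | R < ‖x‖} ∈ (H : Filter (Fin N → ℝ)) := h1
        rw [hHcoe, Filter.mem_map] at h3
        exact h3
      set φ : (Fin N → ℝ) → (Fin N → ℝ) := fun u => ‖u‖⁻¹ • u with hφdef
      have hsphere : Metric.sphere (0 : Fin N → ℝ) 1 ∈ (H.map φ : Filter (Fin N → ℝ)) := by
        rw [show ((H.map φ : Ultrafilter (Fin N → ℝ)) : Filter (Fin N → ℝ))
            = Filter.map φ (H : Filter (Fin N → ℝ)) from rfl, Filter.mem_map]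
        have h0 : {x : Fin N → ℝ | (0:ℝ) < ‖x‖} ∈ (H : Filter (Fin N → ℝ)) := by
          have := hGnorm 0
          rw [hHcoe, Filter.mem_map]
          exact this
        refine Filter.mem_of_superset h0 ?_
        intro u hu
        have hu' : (0:ℝ) < ‖u‖ := hu
        simp only [hφdef, Set.mem_preimage, Metric.mem_sphere, dist_zero_right, norm_smul,
          Real.norm_eq_abs, abs_inv, abs_norm]
        rw [inv_mul_cancel₀ (ne_of_gt hu')]
      obtain ⟨d, hdsph, hHd⟩ := isCompact_iff_ultrafilter_le_nhds.mp
        (isCompact_sphere (0 : Fin N → ℝ) 1) (H.map φ) (le_principal_iff.mpr hsphere)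
      have hd1 : ‖d‖ = 1 := by simpa [dist_zero_right] using hdsph
      have hGfact : ∀ {W : Set (Fin N → ℝ)}, W ∈ 𝓝 d →
          {p : X × ℝ | φ (w p) ∈ W} ∈ (G : Filter (X × ℝ)) := by
        intro W hW
        have h1 : W ∈ ((H.map φ : Ultrafilter (Fin N → ℝ)) : Filter (Fin N → ℝ)) := hHd hW
        rw [show ((H.map φ : Ultrafilter (Fin N → ℝ)) : Filter (Fin N → ℝ))
            = Filter.map φ (H : Filter (Fin N → ℝ)) from rfl, Filter.mem_map, hHcoe,
          Filter.mem_map] at h1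
        exact h1
      -- d lies in the complement S'
      have hdS' : d ∈ S' := by
        have h1 : {p : X × ℝ | φ (w p) ∈ (S' : Set (Fin N → ℝ))} ∈ (G : Filter (X × ℝ)) :=
          Filter.mem_of_superset hGC
            (fun p hp => S'.smul_mem _ ((hwspec p hp).2.2.2))
        have h2 : (S' : Set (Fin N → ℝ)) ∈
            ((H.map φ : Ultrafilter (Fin N → ℝ)) : Filter (Fin N → ℝ)) := by
          rw [show ((H.map φ : Ultrafilter (Fin N → ℝ)) : Filter (Fin N → ℝ))
              = Filter.map φ (H : Filter (Fin N → ℝ)) from rfl, Filter.mem_map, hHcoe,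
            Filter.mem_map]
          exact h1
        have h3 : ClusterPt d (𝓟 (S' : Set (Fin N → ℝ))) :=
          Filter.neBot_of_le (le_inf hHd (le_principal_iff.mpr h2))
        have h4 : d ∈ (S' : Set (Fin N → ℝ)) := by
          rw [← S'.closed_of_finiteDimensional.closure_eq]
          exact mem_closure_iff_clusterPt.mpr h3
        exact h4
      -- d belongs to ℒ
      have hdP : d ∈ asymCone P := by
        intro U hU ε hε
        have h1 := hGfact hU
        have h2 := hGnorm ε⁻¹
        obtain ⟨p, ⟨⟨hp1, hp2⟩, hp3⟩⟩ :=
          Filter.nonempty_of_mem (Filter.inter_mem (Filter.inter_mem h1 h2) hGC)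
        simp only [Set.mem_setOf_eq] at hp1 hp2
        have hpos : (0:ℝ) < ‖w p‖ := lt_trans (inv_pos.mpr hε) hp2
        refine ⟨w p, (hwspec p hp3).1, ‖w p‖⁻¹, inv_nonneg.mpr (norm_nonneg _), ?_, hp1⟩
        rw [← inv_inv ε]
        exact inv_strictAnti₀ (inv_pos.mpr hε) hp2
      have hdV : (d, (0:ℝ)) ∈ asymCone (epigraph V₀) := by
        intro U hU ε hε
        rw [nhds_prod_eq] at hU
        obtain ⟨U₁, hU₁, U₂, hU₂, hsub⟩ := Filter.mem_prod_iff.mp hU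
        obtain ⟨r, hr, hball⟩ := Metric.mem_nhds_iff.mp hU₂
        set B : ℝ := |zm.2| + 1 with hB
        have hBpos : (0:ℝ) < B := by positivity
        have h1 := hGfact hU₁
        have h2 : {p : X × ℝ | |p.2| < B} ∈ (G : Filter (X × ℝ)) := by
          have hmem0 : zm.2 ∈ Metric.ball (0:ℝ) B := by
            simp only [Metric.mem_ball, Real.dist_eq, sub_zero]; linarith [abs_nonneg zm.2]
          have hb := Metric.isOpen_ball.mem_nhds hmem0
          have hmem2 : {t : ℝ | |t| < B} ∈ 𝓝 zm.2 := by
            refine Filter.mem_of_superset hb ?_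
            intro t ht
            simpa [Real.dist_eq] using ht
          exact hGn (continuous_snd.tendsto zm hmem2)
        have h3 := hGnorm (ε⁻¹ + B / r)
        obtain ⟨p, ⟨⟨⟨hp1, hp2⟩, hp3⟩, hp4⟩⟩ :=
          Filter.nonempty_of_mem
            (Filter.inter_mem (Filter.inter_mem (Filter.inter_mem h1 h2) h3) hGC)
        simp only [Set.mem_setOf_eq] at hp1 hp2 hp3
        have hεi : (0:ℝ) < ε⁻¹ := inv_pos.mpr hε
        have hBr : (0:ℝ) < B / r := div_pos hBpos hr
        have hpos : (0:ℝ) < ‖w p‖ := by linarith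
        set l : ℝ := ‖w p‖⁻¹ with hl
        have hl0 : 0 ≤ l := inv_nonneg.mpr (norm_nonneg _)
        have hlε : l < ε := by
          rw [hl, ← inv_inv ε]
          exact inv_strictAnti₀ hεi (by linarith)
        have hlp : l * |p.2| < r := by
          have hxr : B / r < ‖w p‖ := by linarith
          have h5 : B < ‖w p‖ * r := (div_lt_iff₀ hr).mp hxr
          have h6 : |p.2| < ‖w p‖ * r := lt_trans hp2 h5
          have h7 : l * |p.2| < l * (‖w p‖ * r) := by
            apply mul_lt_mul_of_pos_left h6 (inv_pos.mpr hpos)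
          rw [hl] at h7 ⊢
          calc ‖w p‖⁻¹ * |p.2| < ‖w p‖⁻¹ * (‖w p‖ * r) := h7
            _ = r := by field_simp
        refine ⟨(w p, p.2), (hwspec p hp4).2.1, l, hl0, hlε, ?_⟩
        have hmem2 : l * p.2 ∈ U₂ := by
          apply hball
          simp only [Metric.mem_ball, Real.dist_eq, sub_zero]
          rw [abs_mul, abs_of_nonneg hl0]
          exact hlp
        exact hsub (Set.mk_mem_prod hp1 hmem2)
      have hdA : V₁ d ∈ asymCone A := by
        intro U hU ε hε
        have h0U : U ∈ 𝓝 ((0:X) + V₁ d) := by rwa [zero_add]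
        obtain ⟨T, hT, U', hU', hadd⟩ := exists_nhds_add (0:X) (V₁ d) h0U
        have hT0 : T ∈ 𝓝 ((0:ℝ) • zm.1) := by rwa [zero_smul]
        obtain ⟨δ, hδ, VZ, hVZ, hsm⟩ := exists_nhds_smul (0:ℝ) zm.1 hT0
        obtain ⟨W, hW, husc⟩ := hV₁usc d U' hU'
        have h1 := hGfact hW
        have h2 : {p : X × ℝ | p.1 ∈ VZ} ∈ (G : Filter (X × ℝ)) :=
          hGn ((continuous_fst.tendsto zm) hVZ)
        have h3 := hGnorm (ε⁻¹ + δ⁻¹)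
        obtain ⟨p, ⟨⟨⟨hp1, hp2⟩, hp3⟩, hp4⟩⟩ :=
          Filter.nonempty_of_mem
            (Filter.inter_mem (Filter.inter_mem (Filter.inter_mem h1 h2) h3) hGC)
        simp only [Set.mem_setOf_eq] at hp1 hp2 hp3
        have hεi : (0:ℝ) < ε⁻¹ := inv_pos.mpr hε
        have hδi : (0:ℝ) < δ⁻¹ := inv_pos.mpr hδ
        have hpos : (0:ℝ) < ‖w p‖ := by linarith
        set l : ℝ := ‖w p‖⁻¹ with hl
        have hl0 : 0 ≤ l := inv_nonneg.mpr (norm_nonneg _)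
        have hlε : l < ε := by
          rw [hl, ← inv_inv ε]; exact inv_strictAnti₀ hεi (by linarith)
        have hlδ : l < δ := by
          rw [hl, ← inv_inv δ]; exact inv_strictAnti₀ hδi (by linarith)
        obtain ⟨u, hu, q, hq, heq⟩ := husc (φ (w p)) hp1
        have hhom : V₁ (φ (w p)) = l • V₁ (w p) := hV₁hom l hl0 (w p)
        have hA1 : p.1 + V₁ (w p) ∈ A := (hwspec p hp4).2.2.1
        have hqA : ‖w p‖ • q ∈ Xp := hXp_cone ‖w p‖ (norm_nonneg _) q hq
        have hA2 : (p.1 + V₁ (w p)) + ‖w p‖ • q ∈ A := hAmono _ hA1 _ hqA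
        have hcalc : l • ((p.1 + V₁ (w p)) + ‖w p‖ • q) = l • p.1 + u := by
          have h5 : l • V₁ (w p) = u - q := by rw [← hhom, heq]
          have h6 : l • (‖w p‖ • q) = q := by
            rw [smul_smul, hl, inv_mul_cancel₀ (ne_of_gt hpos), one_smul]
          rw [smul_add, smul_add, h5, h6]
          abel
        have hmemT : l • p.1 ∈ T := by
          apply hsm l _ p.1 hp2
          rw [sub_zero, abs_of_nonneg hl0]
          exact hlδ
        refine ⟨(p.1 + V₁ (w p)) + ‖w p‖ • q, hA2, l, hl0, hlε, ?_⟩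
        rw [hcalc]
        exact hadd _ hmemT _ hu
      have hdL : d ∈ Lset A P V₀ V₁ := ⟨hdP, hdV, hdA⟩
      have hdS : d ∈ S := by
        have : d ∈ (S : Set (Fin N → ℝ)) := by rw [hS]; exact hdL
        exact this
      have hd0 : d = 0 := (Submodule.disjoint_def.mp hcompl.disjoint) d hdS hdS'
      rw [hd0] at hd1
      simp at hd1
  -- sublevel sets of the risk measure are closed
  have hsub_closed : ∀ y : EReal, IsClosed {Z : X | riskM A P V₀ V₁ Z ≤ y} := by
    intro y
    have heq : {Z : X | riskM A P V₀ V₁ Z ≤ y}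
        = ⋂ (r : ℝ) (_ : y < (r : EReal)), {Z : X | (Z, r) ∈ Cs} := by
      ext Z
      simp only [Set.mem_setOf_eq, Set.mem_iInter]
      constructor
      · intro h r hr
        have hlt : riskM A P V₀ V₁ Z < (r : EReal) := lt_of_le_of_lt h hr
        rw [riskM] at hlt
        obtain ⟨a, ha, hlt'⟩ := sInf_lt_iff.mp hlt
        obtain ⟨x, ⟨hxP, hxA⟩, rfl⟩ := ha
        have hlt2 : ((V₀ x : ℝ) : EReal) < (r : EReal) := hlt'
        have : V₀ x ≤ r := le_of_lt (by exact_mod_cast hlt2)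
        exact ⟨x, hxP, this, hxA⟩
      · intro h
        by_contra hc
        push_neg at hc
        obtain ⟨r, hr1, hr2⟩ := EReal.exists_between_coe_real hc
        obtain ⟨x, hxP, hxV, hxA⟩ := h r hr1
        have h1 : riskM A P V₀ V₁ Z ≤ ((V₀ x : ℝ) : EReal) :=
          sInf_le ⟨x, ⟨hxP, hxA⟩, rfl⟩
        have h2 : riskM A P V₀ V₁ Z ≤ (r : EReal) := h1.trans (by exact_mod_cast hxV)
        exact absurd (lt_of_le_of_lt h2 hr2) (lt_irrefl _)
    rw [heq]
    refine isClosed_iInter fun r => isClosed_iInter fun _ => ?_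
    exact hC.preimage (continuous_id.prodMk continuous_const)
  refine ⟨hC, ?_, ?_⟩
  · -- lower semicontinuity
    intro Z y hy
    have hcl := hsub_closed y
    have hZ : Z ∈ {W : X | riskM A P V₀ V₁ W ≤ y}ᶜ := by
      simp only [Set.mem_compl_iff, Set.mem_setOf_eq, not_le]
      exact hy
    filter_upwards [hcl.isOpen_compl.mem_nhds hZ] with W hW
    simp only [Set.mem_compl_iff, Set.mem_setOf_eq, not_le] at hW
    exact hW
  · -- attainment
    intro Z hbot htop
    set r : ℝ := (riskM A P V₀ V₁ Z).toReal with hrdef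
    have hρ : riskM A P V₀ V₁ Z = (r : EReal) := (EReal.coe_toReal htop hbot).symm
    have hstep : ∀ n : ℕ, ((Z, r + 1/(n+1)) : X × ℝ) ∈ Cs := by
      intro n
      have hpos : (0:ℝ) < 1/(n+1) := by positivity
      have hlt : riskM A P V₀ V₁ Z < ((r + 1/(n+1) : ℝ) : EReal) := by
        rw [hρ]
        exact_mod_cast lt_add_of_pos_right r hpos
      rw [riskM] at hlt
      obtain ⟨a, ha, hlt'⟩ := sInf_lt_iff.mp hlt
      obtain ⟨x, ⟨hxP, hxA⟩, rfl⟩ := ha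
      have hlt2 : ((V₀ x : ℝ) : EReal) < ((r + 1/(n+1) : ℝ) : EReal) := hlt'
      have : V₀ x ≤ r + 1/(n+1) := le_of_lt (by exact_mod_cast hlt2)
      exact ⟨x, hxP, this, hxA⟩
    have htend : Filter.Tendsto (fun n : ℕ => ((Z, r + 1/(n+1)) : X × ℝ))
        atTop (𝓝 (Z, r)) := by
      have h1 : Filter.Tendsto (fun n : ℕ => (1:ℝ)/(n+1)) atTop (𝓝 0) :=
        tendsto_one_div_add_atTop_nhds_zero_nat
      have h2 : Filter.Tendsto (fun n : ℕ => r + 1/(n+1)) atTop (𝓝 r) := by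
        simpa using tendsto_const_nhds.add h1
      exact tendsto_const_nhds.prodMk_nhds h2
    have hmem : ((Z, r) : X × ℝ) ∈ Cs :=
      hC.mem_of_tendsto htend (Filter.Eventually.of_forall hstep)
    obtain ⟨x, hxP, hxV, hxA⟩ := hmem
    have h1 : riskM A P V₀ V₁ Z ≤ ((V₀ x : ℝ) : EReal) := sInf_le ⟨x, ⟨hxP, hxA⟩, rfl⟩
    refine ⟨x, hxP, hxA, le_antisymm ?_ h1⟩
    rw [hρ]
    exact_mod_cast hxV
end
end

section
/- Assume that 𝒜 is closed, 𝒫 is closed, V₀ is lower semicontinuous, V₁ is anti-star shaped (V₁(λx) ≥ λV₁(x) for all λ ∈ [0,1] and all x ∈ ℝ^N) and upper semicontinuous, and that ℒ = {0}. Then the set 𝒞 is closed in 𝒳 × ℝ, the risk measure ρ is lower semicontinuous, and for every X ∈ 𝒳 with ρ(X) ∈ ℝ the infimum defining ρ(X) is attained: there exists x ∈ 𝒫 with X + V₁(x) ∈ 𝒜 and V₀(x) = ρ(X). -/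
open Topology Filter Set Pointwise

noncomputable section

/-- A cluster point of a filter is frequently approximated along the filter. -/
lemma clusterPt_frequently_mem {α : Type*} [TopologicalSpace α] {x : α} {f : Filter α}
    (h : ClusterPt x f) {U : Set α} (hU : U ∈ 𝓝 x) : ∃ᶠ y in f, y ∈ U := by
  rw [Filter.frequently_iff]
  intro V hV
  obtain ⟨y, hyU, hyV⟩ := clusterPt_iff_nonempty.mp h hU hV
  exact ⟨y, hyV, hyU⟩

/-- Splitting a neighborhood of a sum in a topological additive group. -/
lemma nhds_add_split {X : Type*} [AddCommGroup X] [TopologicalSpace X]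
    [IsTopologicalAddGroup X] {a b : X} {U : Set X} (hU : U ∈ 𝓝 (a + b)) :
    ∃ U₀ ∈ 𝓝 a, ∃ U₁ ∈ 𝓝 b, ∀ x ∈ U₀, ∀ y ∈ U₁, x + y ∈ U := by
  have h : Filter.Tendsto (fun q : X × X => q.1 + q.2) (𝓝 (a, b)) (𝓝 (a + b)) :=
    continuous_add.tendsto (a, b)
  have h2 : (fun q : X × X => q.1 + q.2) ⁻¹' U ∈ 𝓝 (a, b) := h hU
  rw [nhds_prod_eq, Filter.mem_prod_iff] at h2
  obtain ⟨U₀, hU₀, U₁, hU₁, hsub⟩ := h2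
  exact ⟨U₀, hU₀, U₁, hU₁, fun x hx y hy => hsub (Set.mk_mem_prod hx hy)⟩

theorem stmt1
    {X : Type*} [AddCommGroup X] [Module ℝ X] [TopologicalSpace X]
    [IsTopologicalAddGroup X] [ContinuousSMul ℝ X]
    (Xp : Set X) (hXp_cone : ∀ c : ℝ, 0 ≤ c → ∀ z ∈ Xp, c • z ∈ Xp)
    (hXp_conv : Convex ℝ Xp)
    {N : ℕ} (hN : 1 ≤ N)
    (P : Set (Fin N → ℝ)) (hP0 : (0 : Fin N → ℝ) ∈ P)
    (V₀ : (Fin N → ℝ) → ℝ) (hV₀0 : V₀ 0 = 0) (hV₀sp : ∀ x, -V₀ (-x) ≤ V₀ x)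
    (V₁ : (Fin N → ℝ) → X) (hV₁0 : V₁ 0 = 0) (hV₁sp : ∀ x, -V₁ (-x) - V₁ x ∈ Xp)
    (A : Set X) (hA0 : (0 : X) ∈ A) (hAmono : ∀ a ∈ A, ∀ p ∈ Xp, a + p ∈ A)
    (hAcl : IsClosed A) (hPcl : IsClosed P)
    (hV₀lsc : LowerSemicontinuous V₀)
    (hV₁anti : ∀ l : ℝ, 0 ≤ l → l ≤ 1 → ∀ x, V₁ (l • x) - l • V₁ x ∈ Xp)
    (hV₁usc : USCV1 Xp V₁)
    (hL0 : Lset A P V₀ V₁ = {0}) :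
    IsClosed {p : X × ℝ | ∃ x ∈ P, V₀ x ≤ p.2 ∧ p.1 + V₁ x ∈ A} ∧
    LowerSemicontinuous (riskM A P V₀ V₁) ∧
    ∀ Z : X, riskM A P V₀ V₁ Z ≠ ⊥ → riskM A P V₀ V₁ Z ≠ ⊤ →
      ∃ x ∈ P, Z + V₁ x ∈ A ∧ ((V₀ x : ℝ) : EReal) = riskM A P V₀ V₁ Z := by
  set C : Set (X × ℝ) := {p : X × ℝ | ∃ x ∈ P, V₀ x ≤ p.2 ∧ p.1 + V₁ x ∈ A} with hCdef
  -- Step 1: C is closed.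
  have hCcl : IsClosed C := by
    rw [isClosed_iff_clusterPt]
    rintro ⟨Z, m⟩ hcl
    set F : Filter (X × ℝ) := 𝓝 (Z, m) ⊓ 𝓟 C with hFdef
    haveI hFne : F.NeBot := hcl
    have hFC : ∀ᶠ p in F, p ∈ C := by
      have : 𝓟 C ≤ 𝓟 C := le_rfl
      exact Filter.eventually_principal.mpr (fun p hp => hp) |>.filter_mono inf_le_right
    have hex : ∀ p : X × ℝ, p ∈ C → ∃ x, x ∈ P ∧ V₀ x ≤ p.2 ∧ p.1 + V₁ x ∈ A := by
      rintro p ⟨x, hx, h1, h2⟩; exact ⟨x, hx, h1, h2⟩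
    choose! w hw1 hw2 hw3 using hex
    have hsnd : Filter.Tendsto (fun p : X × ℝ => p.2) F (𝓝 m) :=
      (continuous_snd.tendsto (Z, m)).mono_left inf_le_left
    have hfst : Filter.Tendsto (fun p : X × ℝ => p.1) F (𝓝 Z) :=
      (continuous_fst.tendsto (Z, m)).mono_left inf_le_left
    by_cases hbd : ∃ R : ℝ, ∃ᶠ p in F, ‖w p‖ ≤ R
    · -- bounded case: extract a cluster point of the witnesses
      obtain ⟨R, hR⟩ := hbd
      set F' : Filter (X × ℝ) := F ⊓ 𝓟 {p | ‖w p‖ ≤ R} with hF'def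
      haveI hF'ne : F'.NeBot := Filter.frequently_iff_neBot.mp hR
      have hF'F : F' ≤ F := inf_le_left
      have hF'C : ∀ᶠ p in F', p ∈ C := hFC.filter_mono hF'F
      have hF'R : ∀ᶠ p in F', ‖w p‖ ≤ R :=
        Filter.eventually_principal.mpr (fun p hp => hp) |>.filter_mono inf_le_right
      have hmap : F'.map w ≤ 𝓟 (Metric.closedBall (0 : Fin N → ℝ) R) := by
        rw [Filter.le_principal_iff, Filter.mem_map]
        filter_upwards [hF'R] with p hp
        simpa [Metric.mem_closedBall, dist_zero_right] using hp
      obtain ⟨x, -, hx⟩ :=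
        (isCompact_closedBall (0 : Fin N → ℝ) R).exists_clusterPt hmap
      have hfreq : ∀ U ∈ 𝓝 x, ∃ᶠ p in F', w p ∈ U := fun U hU =>
        Filter.frequently_map.mp (clusterPt_frequently_mem hx hU)
      have hxP : x ∈ P := by
        have hle : F'.map w ≤ 𝓟 P := by
          rw [Filter.le_principal_iff, Filter.mem_map]
          filter_upwards [hF'C] with p hp using hw1 p hp
        have : ClusterPt x (𝓟 P) := hx.mono hle
        rw [← hPcl.closure_eq]
        exact mem_closure_iff_clusterPt.mpr this
      have hxV₀ : V₀ x ≤ m := by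
        by_contra hlt
        push_neg at hlt
        set c := (m + V₀ x) / 2 with hc
        have h1 : m < c := by rw [hc]; linarith
        have h2 : c < V₀ x := by rw [hc]; linarith
        have hev : ∀ᶠ y in 𝓝 x, c < V₀ y := hV₀lsc x c h2
        have hfr : ∃ᶠ p in F', c < V₀ (w p) := hfreq {y | c < V₀ y} hev
        have hev2 : ∀ᶠ p in F', p.2 < c :=
          (hsnd.mono_left hF'F).eventually_lt_const h1
        obtain ⟨p, hp1, hp2, hp3⟩ := (hfr.and_eventually (hev2.and hF'C)).exists
        have := hw2 p hp3
        linarith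
      have hxA : Z + V₁ x ∈ A := by
        rw [← hAcl.closure_eq]
        rw [mem_closure_iff_nhds]
        intro U hU
        obtain ⟨U₀, hU₀, U₁, hU₁, hadd⟩ := nhds_add_split hU
        obtain ⟨W, hW, hWp⟩ := hV₁usc x U₁ hU₁
        have hfr : ∃ᶠ p in F', w p ∈ W := hfreq W hW
        have hev : ∀ᶠ p in F', p.1 ∈ U₀ := (hfst.mono_left hF'F) hU₀
        obtain ⟨p, hpW, hpU₀, hpC⟩ := (hfr.and_eventually (hev.and hF'C)).exists
        obtain ⟨v, hv, r, hr, hVr⟩ := hWp (w p) hpW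
        have haA : p.1 + V₁ (w p) + r ∈ A := hAmono _ (hw3 p hpC) _ hr
        have heq : p.1 + V₁ (w p) + r = p.1 + v := by rw [hVr]; abel
        rw [heq] at haA
        exact ⟨p.1 + v, hadd _ hpU₀ _ hv, haA⟩
      exact ⟨x, hxP, hxV₀, hxA⟩
    · -- unbounded case: contradiction with ℒ = {0}
      exfalso
      push_neg at hbd
      have hub : ∀ R : ℝ, ∀ᶠ p in F, R < ‖w p‖ := by
        intro R
        have := hbd R
        exact this
      have hinvlt : ∀ (ε : ℝ), 0 < ε → ∀ p : X × ℝ, max ε⁻¹ 0 < ‖w p‖ → ‖w p‖⁻¹ < ε := by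
        intro ε hε p hp
        have h1 : ε⁻¹ < ‖w p‖ := lt_of_le_of_lt (le_max_left _ _) hp
        calc ‖w p‖⁻¹ < (ε⁻¹)⁻¹ := inv_strictAnti₀ (inv_pos.mpr hε) h1
          _ = ε := inv_inv ε
      have hl0 : Filter.Tendsto (fun p : X × ℝ => ‖w p‖⁻¹) F (𝓝 0) := by
        rw [Metric.tendsto_nhds]
        intro ε hε
        filter_upwards [hub (max ε⁻¹ 0)] with p hp
        have h0 : 0 < ‖w p‖ := lt_of_le_of_lt (le_max_right _ _) hp
        rw [Real.dist_eq, sub_zero, abs_of_nonneg (inv_nonneg.mpr h0.le)]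
        exact hinvlt ε hε p hp
      set g : X × ℝ → (Fin N → ℝ) := fun p => ‖w p‖⁻¹ • w p with hgdef
      have hgs : F.map g ≤ 𝓟 (Metric.sphere (0 : Fin N → ℝ) 1) := by
        rw [Filter.le_principal_iff, Filter.mem_map]
        filter_upwards [hub 0] with p hp
        have : ‖g p‖ = 1 := by
          rw [hgdef]
          simp only [norm_smul, Real.norm_eq_abs, abs_of_nonneg (inv_nonneg.mpr hp.le)]
          exact inv_mul_cancel₀ hp.ne'
        simpa [Metric.mem_sphere, dist_zero_right] using this
      obtain ⟨u, hu_sph, hu⟩ :=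
        (isCompact_sphere (0 : Fin N → ℝ) 1).exists_clusterPt hgs
      have hufreq : ∀ U ∈ 𝓝 u, ∃ᶠ p in F, g p ∈ U := fun U hU =>
        Filter.frequently_map.mp (clusterPt_frequently_mem hu hU)
      have huL : u ∈ Lset A P V₀ V₁ := by
        refine ⟨?_, ?_, ?_⟩
        · -- u ∈ asymCone P
          intro U hU ε hε
          obtain ⟨p, hpU, hpC, hpR⟩ :=
            ((hufreq U hU).and_eventually (hFC.and (hub (max ε⁻¹ 0)))).exists
          have h0 : 0 < ‖w p‖ := lt_of_le_of_lt (le_max_right _ _) hpR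
          exact ⟨w p, hw1 p hpC, ‖w p‖⁻¹, inv_nonneg.mpr h0.le, hinvlt ε hε p hpR, hpU⟩
        · -- (u, 0) ∈ asymCone (epigraph V₀)
          intro U hU ε hε
          rw [mem_nhds_prod_iff] at hU
          obtain ⟨U₁, hU₁, U₂, hU₂, hsub⟩ := hU
          obtain ⟨δ, hδ, hball⟩ := Metric.mem_nhds_iff.mp hU₂
          have hm1 : ∀ᶠ p in F, |p.2| < |m| + 1 :=
            hsnd.abs.eventually_lt_const (lt_add_one |m|)
          obtain ⟨p, hpU₁, hpC, hpm, hpR⟩ :=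
            ((hufreq U₁ hU₁).and_eventually
              (hFC.and (hm1.and (hub (max (max ε⁻¹ 0) ((|m| + 1) / δ)))))).exists
          have h0 : 0 < ‖w p‖ :=
            lt_of_le_of_lt (le_trans (le_max_right _ _) (le_max_left _ _)) hpR
          have hlε : ‖w p‖⁻¹ < ε :=
            hinvlt ε hε p (lt_of_le_of_lt (le_max_left _ _) hpR)
          have hmδ : 0 < (|m| + 1) / δ := by positivity
          have hδb : ‖w p‖⁻¹ * (|m| + 1) < δ := by
            have h1 : (|m| + 1) / δ < ‖w p‖ := lt_of_le_of_lt (le_max_right _ _) hpR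
            have h2 : ‖w p‖⁻¹ < ((|m| + 1) / δ)⁻¹ := inv_strictAnti₀ hmδ h1
            have h3 : ((|m| + 1) / δ)⁻¹ = δ / (|m| + 1) := by
              rw [inv_div]
            rw [h3] at h2
            have h4 : (0:ℝ) < |m| + 1 := by positivity
            calc ‖w p‖⁻¹ * (|m| + 1) < (δ / (|m| + 1)) * (|m| + 1) := by
                  exact mul_lt_mul_of_pos_right h2 h4
              _ = δ := by field_simp
          have hsm : |‖w p‖⁻¹ * p.2| < δ := by
            rw [abs_mul, abs_of_nonneg (inv_nonneg.mpr h0.le)]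
            calc ‖w p‖⁻¹ * |p.2| ≤ ‖w p‖⁻¹ * (|m| + 1) :=
                  mul_le_mul_of_nonneg_left hpm.le (inv_nonneg.mpr h0.le)
              _ < δ := hδb
          refine ⟨(w p, p.2), hw2 p hpC, ‖w p‖⁻¹, inv_nonneg.mpr h0.le, hlε, ?_⟩
          have : (‖w p‖⁻¹ • ((w p, p.2) : (Fin N → ℝ) × ℝ)) =
              (‖w p‖⁻¹ • w p, ‖w p‖⁻¹ * p.2) := rfl
          rw [this]
          apply hsub
          refine Set.mk_mem_prod hpU₁ (hball ?_)
          rw [Metric.mem_ball, Real.dist_eq, sub_zero]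
          exact hsm
        · -- V₁ u ∈ asymCone A
          intro U hU ε hε
          have hU' : U ∈ 𝓝 ((0 : X) + V₁ u) := by rwa [zero_add]
          obtain ⟨U₀, hU₀, U₁, hU₁, hadd⟩ := nhds_add_split hU'
          obtain ⟨W, hW, hWp⟩ := hV₁usc u U₁ hU₁
          have htZ : Filter.Tendsto (fun p : X × ℝ => ‖w p‖⁻¹ • p.1) F (𝓝 (0 : X)) := by
            have := hl0.smul hfst
            simpa using this
          have hevZ : ∀ᶠ p in F, ‖w p‖⁻¹ • p.1 ∈ U₀ := htZ hU₀
          obtain ⟨p, hpW, hpC, hpZ, hpR⟩ :=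
            ((hufreq W hW).and_eventually (hFC.and (hevZ.and (hub (max ε⁻¹ 1))))).exists
          have h0 : 0 < ‖w p‖ :=
            lt_of_lt_of_le zero_lt_one (le_of_lt (lt_of_le_of_lt (le_max_right _ _) hpR))
          set l : ℝ := ‖w p‖⁻¹ with hldef
          have hlpos : 0 < l := inv_pos.mpr h0
          have hlne : l ≠ 0 := hlpos.ne'
          have hl1 : l ≤ 1 := by
            have h1 : (1:ℝ) < ‖w p‖ := lt_of_le_of_lt (le_max_right _ _) hpR
            have h2 : l < (1:ℝ)⁻¹ := inv_strictAnti₀ zero_lt_one h1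
            rw [inv_one] at h2
            exact h2.le
          have hlε : l < ε := by
            have h1 : ε⁻¹ < ‖w p‖ := lt_of_le_of_lt (le_max_left _ _) hpR
            calc l < (ε⁻¹)⁻¹ := inv_strictAnti₀ (inv_pos.mpr hε) h1
              _ = ε := inv_inv ε
          have hq : V₁ (l • w p) - l • V₁ (w p) ∈ Xp := hV₁anti l hlpos.le hl1 (w p)
          obtain ⟨v, hv, r, hr, hVr⟩ := hWp (g p) hpW
          have hgp : g p = l • w p := rfl
          rw [hgp] at hVr
          set q : X := V₁ (l • w p) - l • V₁ (w p) with hqdef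
          have ha : p.1 + V₁ (w p) ∈ A := hw3 p hpC
          have ha2 : p.1 + V₁ (w p) + l⁻¹ • q ∈ A :=
            hAmono _ ha _ (hXp_cone l⁻¹ (inv_nonneg.mpr hlpos.le) _ hq)
          have ha3 : p.1 + V₁ (w p) + l⁻¹ • q + l⁻¹ • r ∈ A :=
            hAmono _ ha2 _ (hXp_cone l⁻¹ (inv_nonneg.mpr hlpos.le) _ hr)
          refine ⟨_, ha3, l, hlpos.le, hlε, ?_⟩
          have hll : l • (l⁻¹ • q) = q := by
            rw [smul_smul, mul_inv_cancel₀ hlne, one_smul]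
          have hll' : l • (l⁻¹ • r) = r := by
            rw [smul_smul, mul_inv_cancel₀ hlne, one_smul]
          have key : l • (p.1 + V₁ (w p) + l⁻¹ • q + l⁻¹ • r) = l • p.1 + v := by
            rw [smul_add, smul_add, smul_add, hll, hll']
            have h1 : l • V₁ (w p) = v - r - q := by
              rw [hqdef, hVr]; abel
            rw [h1]
            abel
          rw [key]
          exact hadd _ hpZ _ hv
      rw [hL0] at huL
      have hu1 : ‖u‖ = 1 := by simpa [Metric.mem_sphere, dist_zero_right] using hu_sph
      rw [huL] at hu1
      simp at hu1
  -- Step 2: lower semicontinuity of the risk measure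
  have hfeas : ∀ (Z : X) (x : Fin N → ℝ), x ∈ P → Z + V₁ x ∈ A →
      riskM A P V₀ V₁ Z ≤ ((V₀ x : ℝ) : EReal) := by
    intro Z x hx hA'
    exact sInf_le ⟨x, ⟨hx, hA'⟩, rfl⟩
  have hlsc : LowerSemicontinuous (riskM A P V₀ V₁) := by
    intro Z y hy
    obtain ⟨c₀, hc₀1, hc₀2⟩ := EReal.exists_between_coe_real hy
    have hnotC : (Z, c₀) ∉ C := by
      rintro ⟨x, hx, h1, h2⟩
      have := hfeas Z x hx h2
      have h3 : ((V₀ x : ℝ) : EReal) ≤ (c₀ : EReal) := EReal.coe_le_coe_iff.mpr h1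
      exact absurd (le_trans this h3) (not_le.mpr hc₀2)
    have hopen : IsOpen Cᶜ := hCcl.isOpen_compl
    have hcont : Continuous (fun Z' : X => ((Z', c₀) : X × ℝ)) :=
      continuous_id.prodMk continuous_const
    have hev : ∀ᶠ Z' in 𝓝 Z, (Z', c₀) ∉ C := by
      have : (fun Z' : X => ((Z', c₀) : X × ℝ)) ⁻¹' Cᶜ ∈ 𝓝 Z :=
        hcont.continuousAt.preimage_mem_nhds (hopen.mem_nhds hnotC)
      filter_upwards [this] with Z' hZ' using hZ'
    filter_upwards [hev] with Z' hZ'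
    have hge : (c₀ : EReal) ≤ riskM A P V₀ V₁ Z' := by
      apply le_sInf
      rintro b ⟨x, ⟨hx, hA'⟩, rfl⟩
      by_contra hlt
      push_neg at hlt
      have : V₀ x ≤ c₀ := (EReal.coe_le_coe_iff.mp hlt.le)
      exact hZ' ⟨x, hx, this, hA'⟩
    exact lt_of_lt_of_le hc₀1 hge
  refine ⟨hCcl, hlsc, ?_⟩
  -- Step 3: attainment
  intro Z hbot htop
  set r : ℝ := (riskM A P V₀ V₁ Z).toReal with hrdef
  have hrr : ((r : ℝ) : EReal) = riskM A P V₀ V₁ Z := EReal.coe_toReal htop hbot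
  have hmem : ∀ n : ℕ, ((Z, r + 1 / (n + 1)) : X × ℝ) ∈ C := by
    intro n
    have hlt : riskM A P V₀ V₁ Z < ((r + 1 / (n + 1) : ℝ) : EReal) := by
      rw [← hrr]
      apply EReal.coe_lt_coe_iff.mpr
      have hpos : (0:ℝ) < 1 / ((n:ℝ) + 1) := by positivity
      linarith
    obtain ⟨b, ⟨x, ⟨hx, hA'⟩, rfl⟩, hblt⟩ := sInf_lt_iff.mp hlt
    exact ⟨x, hx, (EReal.coe_lt_coe_iff.mp hblt).le, hA'⟩
  have htend : Filter.Tendsto (fun n : ℕ => ((Z, r + 1 / (n + 1)) : X × ℝ))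
      Filter.atTop (𝓝 (Z, r)) := by
    apply Filter.Tendsto.prodMk_nhds tendsto_const_nhds
    have h1 : Filter.Tendsto (fun n : ℕ => 1 / ((n : ℝ) + 1)) Filter.atTop (𝓝 0) :=
      tendsto_one_div_add_atTop_nhds_zero_nat
    have h2 : Filter.Tendsto (fun n : ℕ => r + 1 / ((n : ℝ) + 1)) Filter.atTop (𝓝 (r + 0)) :=
      Filter.Tendsto.add tendsto_const_nhds h1
    simpa using h2
  have hZr : ((Z, r) : X × ℝ) ∈ C :=
    hCcl.mem_of_tendsto htend (Filter.Eventually.of_forall hmem)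
  obtain ⟨x, hx, h1, h2⟩ := hZr
  refine ⟨x, hx, h2, ?_⟩
  apply le_antisymm
  · rw [← hrr]
    exact EReal.coe_le_coe_iff.mpr h1
  · exact hfeas Z x hx h2
end
end

section
/- Assume that 𝒜 is closed, 𝒫 is compact, V₀ is lower semicontinuous, V₁ is upper semicontinuous, and ℒ = {0}. Then the set 𝒞 is closed in 𝒳 × ℝ, the risk measure ρ is lower semicontinuous, and for every X ∈ 𝒳 with ρ(X) ∈ ℝ the infimum defining ρ(X) is attained: there exists x ∈ 𝒫 with X + V₁(x) ∈ 𝒜 and V₀(x) = ρ(X). -/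
open Topology Filter Set Pointwise

noncomputable section

theorem stmt2
    {X : Type*} [AddCommGroup X] [Module ℝ X] [TopologicalSpace X]
    [IsTopologicalAddGroup X] [ContinuousSMul ℝ X]
    (Xp : Set X) (hXp_cone : ∀ c : ℝ, 0 ≤ c → ∀ z ∈ Xp, c • z ∈ Xp)
    (hXp_conv : Convex ℝ Xp)
    {N : ℕ} (hN : 1 ≤ N)
    (P : Set (Fin N → ℝ)) (hP0 : (0 : Fin N → ℝ) ∈ P)
    (V₀ : (Fin N → ℝ) → ℝ) (hV₀0 : V₀ 0 = 0) (hV₀sp : ∀ x, -V₀ (-x) ≤ V₀ x)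
    (V₁ : (Fin N → ℝ) → X) (hV₁0 : V₁ 0 = 0) (hV₁sp : ∀ x, -V₁ (-x) - V₁ x ∈ Xp)
    (A : Set X) (hA0 : (0 : X) ∈ A) (hAmono : ∀ a ∈ A, ∀ p ∈ Xp, a + p ∈ A)
    (hAcl : IsClosed A) (hPcomp : IsCompact P)
    (hV₀lsc : LowerSemicontinuous V₀)
    (hV₁usc : USCV1 Xp V₁)
    (hL0 : Lset A P V₀ V₁ = {0}) :
    IsClosed {p : X × ℝ | ∃ x ∈ P, V₀ x ≤ p.2 ∧ p.1 + V₁ x ∈ A} ∧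
    LowerSemicontinuous (riskM A P V₀ V₁) ∧
    ∀ Z : X, riskM A P V₀ V₁ Z ≠ ⊥ → riskM A P V₀ V₁ Z ≠ ⊤ →
      ∃ x ∈ P, Z + V₁ x ∈ A ∧ ((V₀ x : ℝ) : EReal) = riskM A P V₀ V₁ Z := by
  classical
  set C := {p : X × ℝ | ∃ x ∈ P, V₀ x ≤ p.2 ∧ p.1 + V₁ x ∈ A} with hCdef
  have hCclosed : IsClosed C := by
    rw [← closure_subset_iff_isClosed]
    intro p hp
    rw [mem_closure_iff_ultrafilter] at hp
    obtain ⟨F, hCF, hF⟩ := hp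
    choose! g hg1 hg2 hg3 using fun q (hq : q ∈ C) => hq
    have hPF : {q : X × ℝ | g q ∈ P} ∈ F := F.sets_of_superset hCF (fun q hq => hg1 q hq)
    obtain ⟨x₀, hx₀P, hG⟩ := hPcomp.ultrafilter_le_nhds (F.map g)
      (le_principal_iff.2 (Ultrafilter.mem_map.2 hPF))
    have hVm : V₀ x₀ ≤ p.2 := by
      by_contra h
      push_neg at h
      set c := (p.2 + V₀ x₀) / 2 with hc
      have hc1 : p.2 < c := by rw [hc]; linarith
      have hc2 : c < V₀ x₀ := by rw [hc]; linarith
      have h1 : ∀ᶠ q : X × ℝ in ↑F, c < V₀ (g q) :=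
        Filter.eventually_map.1 ((hV₀lsc x₀ c hc2).filter_mono hG)
      have h2 : ∀ᶠ q : X × ℝ in ↑F, q.2 < c :=
        ((continuous_snd.tendsto p).mono_left hF).eventually_lt_const hc1
      have h3 : ∀ᶠ q : X × ℝ in ↑F, q ∈ C := hCF
      obtain ⟨q, hq1, hq2, hqC⟩ := (h1.and (h2.and h3)).exists
      have := hg2 q hqC
      linarith
    have hAm : p.1 + V₁ x₀ ∈ A := by
      rw [← hAcl.closure_eq]
      rw [mem_closure_iff]
      intro O hO hmemO
      have hOadd : {q : X × X | q.1 + q.2 ∈ O} ∈ 𝓝 ((p.1, V₁ x₀) : X × X) :=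
        (continuous_add.tendsto (p.1, V₁ x₀)).eventually (hO.mem_nhds hmemO)
      rw [mem_nhds_prod_iff] at hOadd
      obtain ⟨U₁, hU₁, U, hU, hprod⟩ := hOadd
      obtain ⟨W, hW, hWprop⟩ := hV₁usc x₀ U hU
      have e1 : {q : X × ℝ | q.1 ∈ U₁} ∈ F :=
        hF (continuous_fst.continuousAt.preimage_mem_nhds hU₁)
      have e2 : {q : X × ℝ | g q ∈ W} ∈ F := Ultrafilter.mem_map.1 (hG hW)
      have h3 : ∀ᶠ q : X × ℝ in ↑F, q ∈ C := hCF
      have e1' : ∀ᶠ q : X × ℝ in ↑F, q.1 ∈ U₁ := e1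
      have e2' : ∀ᶠ q : X × ℝ in ↑F, g q ∈ W := e2
      obtain ⟨q, hqC, hqU₁, hqW⟩ := (h3.and (e1'.and e2')).exists
      obtain ⟨u, hu, r, hr, heq⟩ := hWprop (g q) hqW
      have hA1 : q.1 + V₁ (g q) + r ∈ A := hAmono _ (hg3 q hqC) r hr
      have hA2 : q.1 + V₁ (g q) + r = q.1 + u := by rw [heq]; abel
      exact ⟨q.1 + u, hprod (Set.mk_mem_prod hqU₁ hu), hA2 ▸ hA1⟩
    exact ⟨x₀, hx₀P, hVm, hAm⟩
  have hkey : ∀ (Z : X) (r : ℝ), riskM A P V₀ V₁ Z ≤ (r : EReal) ↔ (Z, r) ∈ C := by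
    intro Z r
    constructor
    · intro h
      have hseq : ∀ n : ℕ, ((Z, r + 1 / (n + 1)) : X × ℝ) ∈ C := by
        intro n
        have hpos : (0 : ℝ) < 1 / (n + 1) := by positivity
        have hlt : riskM A P V₀ V₁ Z < ((r + 1 / (n + 1) : ℝ) : EReal) :=
          lt_of_le_of_lt h (EReal.coe_lt_coe_iff.2 (by linarith))
        obtain ⟨s, hs, hslt⟩ := sInf_lt_iff.1 hlt
        obtain ⟨x, ⟨hxP, hxA⟩, rfl⟩ := hs
        exact ⟨x, hxP, le_of_lt (EReal.coe_lt_coe_iff.1 hslt), hxA⟩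
      have htend : Filter.Tendsto (fun n : ℕ => ((Z, r + 1 / (n + 1)) : X × ℝ))
          Filter.atTop (𝓝 (Z, r)) := by
        apply Filter.Tendsto.prodMk_nhds tendsto_const_nhds
        have := (tendsto_const_nhds : Filter.Tendsto (fun _ : ℕ => r) Filter.atTop (𝓝 r)).add
          tendsto_one_div_add_atTop_nhds_zero_nat
        simpa using this
      exact hCclosed.mem_of_tendsto htend (Filter.Eventually.of_forall hseq)
    · rintro ⟨x, hxP, hxle, hxA⟩
      calc riskM A P V₀ V₁ Z ≤ ((V₀ x : ℝ) : EReal) :=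
            sInf_le ⟨x, ⟨hxP, hxA⟩, rfl⟩
        _ ≤ (r : EReal) := EReal.coe_le_coe_iff.2 hxle
  have hlsc : LowerSemicontinuous (riskM A P V₀ V₁) := by
    intro Z c hc
    obtain ⟨r, hcr, hrZ⟩ := EReal.exists_between_coe_real hc
    have hnot : (Z, r) ∉ C := fun h => absurd ((hkey Z r).2 h) (not_le.2 hrZ)
    have hopen : IsOpen {Y : X | ((Y, r) : X × ℝ) ∉ C} :=
      hCclosed.isOpen_compl.preimage (continuous_id.prodMk continuous_const)
    filter_upwards [hopen.mem_nhds hnot] with Y hY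
    exact lt_trans hcr (not_le.1 fun h => hY ((hkey Y r).1 h))
  refine ⟨hCclosed, hlsc, ?_⟩
  intro Z hbot htop
  have hr : ((riskM A P V₀ V₁ Z).toReal : EReal) = riskM A P V₀ V₁ Z :=
    EReal.coe_toReal htop hbot
  set r := (riskM A P V₀ V₁ Z).toReal with hrdef
  obtain ⟨x, hxP, hxle, hxA⟩ := (hkey Z r).1 (le_of_eq hr.symm)
  refine ⟨x, hxP, hxA, le_antisymm ?_ (sInf_le ⟨x, ⟨hxP, hxA⟩, rfl⟩)⟩
  rw [← hr]
  exact EReal.coe_le_coe_iff.2 hxle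
end
end

section
/- If ρ is proper, convex, and lower semicontinuous, then 𝒟 is nonempty and for every X ∈ 𝒳 one has ρ(X) = sup over ψ ∈ 𝒟 of (σ_𝒜(ψ) + σ_{𝒫,V₀,V₁}(ψ) − ψ(X)). -/
open Topology Filter Set Pointwise

noncomputable section

/-- The support function `σ_𝒜(ψ) = inf {ψ(Z) : Z ∈ 𝒜}`. -/
def sigmaA {X : Type*} [AddCommGroup X] [Module ℝ X] [TopologicalSpace X] (A : Set X)
    (ψ : X →L[ℝ] ℝ) : EReal :=
  sInf ((fun Z => ((ψ Z : ℝ) : EReal)) '' A)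

/-- The market support function `σ_{𝒫,V₀,V₁}(ψ) = inf {V₀(x) - ψ(V₁(x)) : x ∈ 𝒫}`. -/
def sigmaPV {X : Type*} [AddCommGroup X] [Module ℝ X] [TopologicalSpace X] {N : ℕ}
    (P : Set (Fin N → ℝ)) (V₀ : (Fin N → ℝ) → ℝ) (V₁ : (Fin N → ℝ) → X)
    (ψ : X →L[ℝ] ℝ) : EReal :=
  sInf ((fun x => ((V₀ x - ψ (V₁ x) : ℝ) : EReal)) '' P)

/-- The dual set `𝒟 = {ψ ∈ 𝒳' : σ_𝒜(ψ) > -∞, σ_{𝒫,V₀,V₁}(ψ) > -∞}`. -/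
def dualD {X : Type*} [AddCommGroup X] [Module ℝ X] [TopologicalSpace X] {N : ℕ}
    (A : Set X) (P : Set (Fin N → ℝ)) (V₀ : (Fin N → ℝ) → ℝ) (V₁ : (Fin N → ℝ) → X) :
    Set (X →L[ℝ] ℝ) :=
  {ψ | sigmaA A ψ ≠ ⊥ ∧ sigmaPV P V₀ V₁ ψ ≠ ⊥}

section AuxLemmas

variable {X : Type*} [AddCommGroup X] [Module ℝ X] [TopologicalSpace X]
    [IsTopologicalAddGroup X] [ContinuousSMul ℝ X] [LocallyConvexSpace ℝ X]

/-- Decomposition of a continuous linear functional on `X × ℝ`. -/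
lemma clm_prod_decomp (f : (X × ℝ) →L[ℝ] ℝ) (x : X) (s : ℝ) :
    f (x, s) = f (x, 0) + s * f (0, 1) := by
  have h : (x, s) = ((x, (0:ℝ)) : X × ℝ) + s • ((0 : X), (1:ℝ)) := by
    simp [Prod.ext_iff]
  rw [h, map_add, map_smul, smul_eq_mul]

/-- The basic separation lemma: a closed convex epigraph admits a continuous affine
minorant. -/
lemma sep_base (ρ : X → EReal)
    (hcl : IsClosed {p : X × ℝ | ρ p.1 ≤ (p.2 : EReal)})
    (hcv : Convex ℝ {p : X × ℝ | ρ p.1 ≤ (p.2 : EReal)})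
    (Z₁ : X) (c : ℝ) (hZ₁ : ρ Z₁ = (c : EReal)) :
    ∃ (χ : X →L[ℝ] ℝ) (v : ℝ), ∀ (x : X) (s : ℝ), ρ x ≤ (s : EReal) → χ x ≤ v + s := by
  have hnot : ((Z₁, c - 1) : X × ℝ) ∉ {p : X × ℝ | ρ p.1 ≤ (p.2 : EReal)} := by
    simp only [Set.mem_setOf_eq, hZ₁, EReal.coe_le_coe_iff, not_le]
    linarith
  obtain ⟨f, u, hfu, huf⟩ := geometric_hahn_banach_closed_point hcv hcl hnot
  set α := f ((0 : X), (1:ℝ)) with hα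
  have hmem : ((Z₁, c) : X × ℝ) ∈ {p : X × ℝ | ρ p.1 ≤ (p.2 : EReal)} := by
    simp [hZ₁]
  have h1 := hfu _ hmem
  rw [clm_prod_decomp] at h1 huf
  have hαneg : α < 0 := by nlinarith
  set β := -α with hβ
  have hβpos : 0 < β := by rw [hβ]; linarith
  refine ⟨(β⁻¹) • f.comp (ContinuousLinearMap.inl ℝ X ℝ), u / β, ?_⟩
  intro x s hxs
  have h2 := hfu (x, s) hxs
  rw [clm_prod_decomp] at h2
  simp only [ContinuousLinearMap.smul_apply, ContinuousLinearMap.coe_comp',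
    Function.comp_apply, ContinuousLinearMap.inl_apply, smul_eq_mul]
  have hβne : β ≠ 0 := hβpos.ne'
  have hsα : s * f ((0:X), (1:ℝ)) = -(s * β) := by rw [hβ, hα]; ring
  have h2' : f (x, 0) ≤ u + s * β := by linarith
  have h3 : β⁻¹ * f (x, 0) ≤ β⁻¹ * (u + s * β) :=
    mul_le_mul_of_nonneg_left h2' (inv_nonneg.mpr hβpos.le)
  have h4 : β⁻¹ * (u + s * β) = u / β + s := by field_simp
  linarith

/-- The main separation lemma: any point strictly below a closed convex proper epigraph
is strictly separated by a continuous affine minorant. -/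
lemma sep_main (ρ : X → EReal)
    (hcl : IsClosed {p : X × ℝ | ρ p.1 ≤ (p.2 : EReal)})
    (hcv : Convex ℝ {p : X × ℝ | ρ p.1 ≤ (p.2 : EReal)})
    (Z₁ : X) (c : ℝ) (hZ₁ : ρ Z₁ = (c : EReal))
    (Z : X) (r : ℝ) (hr : (r : EReal) < ρ Z) :
    ∃ (χ : X →L[ℝ] ℝ) (v : ℝ),
      (∀ (x : X) (s : ℝ), ρ x ≤ (s : EReal) → χ x ≤ v + s) ∧ r < χ Z - v := by
  have hnot : ((Z, r) : X × ℝ) ∉ {p : X × ℝ | ρ p.1 ≤ (p.2 : EReal)} := by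
    simp only [Set.mem_setOf_eq, not_le]
    exact hr
  obtain ⟨f, u, hfu, huf⟩ := geometric_hahn_banach_closed_point hcv hcl hnot
  set α := f ((0 : X), (1:ℝ)) with hα
  set φ := f.comp (ContinuousLinearMap.inl ℝ X ℝ) with hφ
  have hφapp : ∀ x : X, φ x = f (x, 0) := fun x => rfl
  have hfxs : ∀ (x : X) (s : ℝ), ρ x ≤ (s : EReal) → φ x + s * α < u := by
    intro x s h
    have := hfu (x, s) h
    rw [clm_prod_decomp] at this
    rw [hφapp]
    exact this
  have hZr : u < φ Z + r * α := by
    rw [clm_prod_decomp] at huf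
    rw [hφapp]
    exact huf
  have hα_nonpos : α ≤ 0 := by
    by_contra hcon
    push_neg at hcon
    have key : ∀ t : ℝ, 0 ≤ t → φ Z₁ + (c + t) * α < u := by
      intro t ht
      apply hfxs
      rw [hZ₁]
      exact_mod_cast (by linarith : c ≤ c + t)
    set t := max 0 ((u - φ Z₁ - c * α) / α) with ht
    have h1 := key t (le_max_left _ _)
    have h2 : (u - φ Z₁ - c * α) / α ≤ t := le_max_right _ _
    have h3 : u - φ Z₁ - c * α ≤ t * α := by
      rw [div_le_iff₀ hcon] at h2
      exact h2
    nlinarith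
  rcases hα_nonpos.lt_or_eq with hneg | h0
  · set β := -α with hβ
    have hβpos : 0 < β := by rw [hβ]; linarith
    refine ⟨(β⁻¹) • φ, u / β, ?_, ?_⟩
    · intro x s h
      have h2 := hfxs x s h
      simp only [ContinuousLinearMap.smul_apply, smul_eq_mul]
      have hβne : β ≠ 0 := hβpos.ne'
      have hsα : s * α = -(s * β) := by rw [hβ]; ring
      have h2' : φ x ≤ u + s * β := by linarith
      have h3 : β⁻¹ * φ x ≤ β⁻¹ * (u + s * β) :=
        mul_le_mul_of_nonneg_left h2' (inv_nonneg.mpr hβpos.le)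
      have h4 : β⁻¹ * (u + s * β) = u / β + s := by field_simp
      linarith
    · simp only [ContinuousLinearMap.smul_apply, smul_eq_mul]
      have hβne : β ≠ 0 := hβpos.ne'
      have hrα : r * α = -(r * β) := by rw [hβ]; ring
      have h3 : u + r * β < φ Z := by linarith
      have h5 : β⁻¹ * (u + r * β) < β⁻¹ * φ Z :=
        mul_lt_mul_of_pos_left h3 (inv_pos.mpr hβpos)
      have h6 : β⁻¹ * (u + r * β) = u / β + r := by field_simp
      linarith
  · obtain ⟨χ₁, v₁, h₁⟩ := sep_base ρ hcl hcv Z₁ c hZ₁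
    have hu : ∀ (x : X) (s : ℝ), ρ x ≤ (s : EReal) → φ x < u := by
      intro x s h
      have h' := hfxs x s h
      rw [h0] at h'
      linarith
    have hZu : u < φ Z := by
      rw [h0] at hZr
      linarith
    set c₀ := max 1 ((r - χ₁ Z + v₁ + 1) / (φ Z - u)) with hc₀
    have hc₀pos : (0:ℝ) < c₀ := lt_of_lt_of_le one_pos (le_max_left _ _)
    refine ⟨χ₁ + c₀ • φ, v₁ + c₀ * u, ?_, ?_⟩
    · intro x s h
      have ha := h₁ x s h
      have hb := hu x s h
      simp only [ContinuousLinearMap.add_apply, ContinuousLinearMap.smul_apply, smul_eq_mul]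
      have hmul : c₀ * φ x ≤ c₀ * u := mul_le_mul_of_nonneg_left hb.le hc₀pos.le
      linarith
    · simp only [ContinuousLinearMap.add_apply, ContinuousLinearMap.smul_apply, smul_eq_mul]
      have h2 : (r - χ₁ Z + v₁ + 1) / (φ Z - u) ≤ c₀ := le_max_right _ _
      have h3 : r - χ₁ Z + v₁ + 1 ≤ c₀ * (φ Z - u) := by
        rw [div_le_iff₀ (by linarith : (0:ℝ) < φ Z - u)] at h2
        exact h2
      nlinarith

end AuxLemmas

/-- From a uniform lower bound on `ψ(W) + V₀(x) - ψ(V₁ x)` we get membership in the dual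
set together with finiteness and a lower bound for the support functions. -/
lemma keyD {X : Type*} [AddCommGroup X] [Module ℝ X] [TopologicalSpace X] {N : ℕ}
    (A : Set X) (P : Set (Fin N → ℝ)) (V₀ : (Fin N → ℝ) → ℝ) (V₁ : (Fin N → ℝ) → X)
    (hA0 : (0:X) ∈ A) (hP0 : (0 : Fin N → ℝ) ∈ P) (hV₀0 : V₀ 0 = 0) (hV₁0 : V₁ 0 = 0)
    (ψ : X →L[ℝ] ℝ) (v : ℝ)
    (h : ∀ W ∈ A, ∀ x ∈ P, -v ≤ ψ W + (V₀ x - ψ (V₁ x))) :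
    ψ ∈ dualD A P V₀ V₁ ∧
      ∃ a b : ℝ, sigmaA A ψ = (a : EReal) ∧ sigmaPV P V₀ V₁ ψ = (b : EReal) ∧
        -v ≤ a + b := by
  have hψ0 : ψ 0 = 0 := map_zero ψ
  have hAlb : ∀ W ∈ A, -v ≤ ψ W := by
    intro W hW
    have := h W hW 0 hP0
    rw [hV₀0, hV₁0, hψ0] at this
    linarith
  have hPlb : ∀ x ∈ P, -v ≤ V₀ x - ψ (V₁ x) := by
    intro x hx
    have := h 0 hA0 x hx
    rw [hψ0] at this
    linarith
  have hA_lb : ((-v : ℝ) : EReal) ≤ sigmaA A ψ := by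
    apply le_sInf
    rintro y ⟨W, hW, rfl⟩
    exact EReal.coe_le_coe_iff.mpr (hAlb W hW)
  have hA_ub : sigmaA A ψ ≤ ((0:ℝ) : EReal) := sInf_le ⟨0, hA0, by simp [hψ0]⟩
  have hP_lb : ((-v : ℝ) : EReal) ≤ sigmaPV P V₀ V₁ ψ := by
    apply le_sInf
    rintro y ⟨x, hx, rfl⟩
    exact EReal.coe_le_coe_iff.mpr (hPlb x hx)
  have hP_ub : sigmaPV P V₀ V₁ ψ ≤ ((0:ℝ) : EReal) :=
    sInf_le ⟨0, hP0, by simp [hV₀0, hV₁0, hψ0]⟩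
  have hAbot : sigmaA A ψ ≠ ⊥ := ((EReal.bot_lt_coe _).trans_le hA_lb).ne'
  have hPbot : sigmaPV P V₀ V₁ ψ ≠ ⊥ := ((EReal.bot_lt_coe _).trans_le hP_lb).ne'
  have hAtop : sigmaA A ψ ≠ ⊤ := (hA_ub.trans_lt (EReal.coe_lt_top _)).ne
  have hPtop : sigmaPV P V₀ V₁ ψ ≠ ⊤ := (hP_ub.trans_lt (EReal.coe_lt_top _)).ne
  set a := (sigmaA A ψ).toReal with hadef
  set b := (sigmaPV P V₀ V₁ ψ).toReal with hbdef
  have ha : sigmaA A ψ = (a : EReal) := (EReal.coe_toReal hAtop hAbot).symm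
  have hb : sigmaPV P V₀ V₁ ψ = (b : EReal) := (EReal.coe_toReal hPtop hPbot).symm
  refine ⟨⟨hAbot, hPbot⟩, a, b, ha, hb, ?_⟩
  by_contra hcon
  push_neg at hcon
  set ε := (-v - (a + b)) / 2 with hε
  have hεpos : 0 < ε := by rw [hε]; linarith
  have hAlt : sigmaA A ψ < ((a + ε : ℝ) : EReal) := by
    rw [ha]
    exact_mod_cast (by linarith : a < a + ε)
  have hPlt : sigmaPV P V₀ V₁ ψ < ((b + ε : ℝ) : EReal) := by
    rw [hb]
    exact_mod_cast (by linarith : b < b + ε)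
  obtain ⟨y, hy, hylt⟩ := sInf_lt_iff.mp hAlt
  obtain ⟨W, hW, rfl⟩ := hy
  obtain ⟨y', hy', hylt'⟩ := sInf_lt_iff.mp hPlt
  obtain ⟨x, hx, rfl⟩ := hy'
  have hW1 : ψ W < a + ε := EReal.coe_lt_coe_iff.mp hylt
  have hx1 : V₀ x - ψ (V₁ x) < b + ε := EReal.coe_lt_coe_iff.mp hylt'
  have := h W hW x hx
  rw [hε] at hW1 hx1
  linarith

theorem stmt3
    {X : Type*} [AddCommGroup X] [Module ℝ X] [TopologicalSpace X]
    [IsTopologicalAddGroup X] [ContinuousSMul ℝ X]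
    [LocallyConvexSpace ℝ X] [T2Space X]
    (Xp : Set X) (hXp_cone : ∀ c : ℝ, 0 ≤ c → ∀ z ∈ Xp, c • z ∈ Xp)
    (hXp_conv : Convex ℝ Xp)
    {N : ℕ} (hN : 1 ≤ N)
    (P : Set (Fin N → ℝ)) (hP0 : (0 : Fin N → ℝ) ∈ P)
    (V₀ : (Fin N → ℝ) → ℝ) (hV₀0 : V₀ 0 = 0) (hV₀sp : ∀ x, -V₀ (-x) ≤ V₀ x)
    (V₁ : (Fin N → ℝ) → X) (hV₁0 : V₁ 0 = 0) (hV₁sp : ∀ x, -V₁ (-x) - V₁ x ∈ Xp)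
    (A : Set X) (hA0 : (0 : X) ∈ A) (hAmono : ∀ a ∈ A, ∀ p ∈ Xp, a + p ∈ A)
    (hproper_bot : ∀ Z : X, riskM A P V₀ V₁ Z ≠ ⊥)
    (hproper_top : ∃ Z : X, riskM A P V₀ V₁ Z ≠ ⊤)
    (hconv : ∀ l : ℝ, 0 ≤ l → l ≤ 1 → ∀ Z W : X,
      riskM A P V₀ V₁ (l • Z + (1 - l) • W) ≤
        (l : EReal) * riskM A P V₀ V₁ Z + ((1 - l : ℝ) : EReal) * riskM A P V₀ V₁ W)
    (hlsc : LowerSemicontinuous (riskM A P V₀ V₁)) :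
    (dualD A P V₀ V₁).Nonempty ∧
    ∀ Z : X, riskM A P V₀ V₁ Z =
      ⨆ ψ ∈ dualD A P V₀ V₁,
        (sigmaA A ψ + sigmaPV P V₀ V₁ ψ - ((ψ Z : ℝ) : EReal)) := by
  classical
  set ρ := riskM A P V₀ V₁ with hρdef
  obtain ⟨Z₁, hZ₁top⟩ := hproper_top
  have hZ₁bot := hproper_bot Z₁
  set c : ℝ := (ρ Z₁).toReal with hc
  have hZ₁ : ρ Z₁ = (c : EReal) := (EReal.coe_toReal hZ₁top hZ₁bot).symm
  -- closedness of the epigraph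
  have hcl : IsClosed {p : X × ℝ | ρ p.1 ≤ (p.2 : EReal)} := by
    rw [← isOpen_compl_iff, isOpen_iff_mem_nhds]
    rintro ⟨x, s⟩ hxs
    simp only [Set.mem_compl_iff, Set.mem_setOf_eq, not_le] at hxs
    obtain ⟨t, ht1, ht2⟩ := EReal.exists_between_coe_real hxs
    have hU : {x' : X | (t : EReal) < ρ x'} ∈ 𝓝 x := hlsc x (t : EReal) ht2
    rw [nhds_prod_eq]
    apply Filter.mem_of_superset
      (Filter.prod_mem_prod hU (Iio_mem_nhds (show s < t by exact_mod_cast ht1)))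
    rintro ⟨x', s'⟩ ⟨h1, h2⟩
    simp only [Set.mem_compl_iff, Set.mem_setOf_eq, not_le]
    exact lt_trans (by exact_mod_cast h2) h1
  -- convexity of the epigraph
  have hcv : Convex ℝ {p : X × ℝ | ρ p.1 ≤ (p.2 : EReal)} := by
    rintro ⟨z, zs⟩ hz ⟨w, ws⟩ hw l m hl hm hlm
    simp only [Set.mem_setOf_eq] at hz hw
    have hzt : ρ z ≠ ⊤ := (hz.trans_lt (EReal.coe_lt_top _)).ne
    have hwt : ρ w ≠ ⊤ := (hw.trans_lt (EReal.coe_lt_top _)).ne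
    have hz' : ρ z = (((ρ z).toReal : ℝ) : EReal) := (EReal.coe_toReal hzt (hproper_bot z)).symm
    have hw' : ρ w = (((ρ w).toReal : ℝ) : EReal) := (EReal.coe_toReal hwt (hproper_bot w)).symm
    set zr := (ρ z).toReal
    set wr := (ρ w).toReal
    have hzr : zr ≤ zs := by
      rw [hz'] at hz
      exact_mod_cast hz
    have hwr : wr ≤ ws := by
      rw [hw'] at hw
      exact_mod_cast hw
    have hm' : m = 1 - l := by linarith
    subst hm'
    have hcc := hconv l hl (by linarith) z w
    rw [hz', hw', ← EReal.coe_mul, ← EReal.coe_mul, ← EReal.coe_add] at hcc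
    show ρ (l • z + (1 - l) • w) ≤ ((l * zs + (1 - l) * ws : ℝ) : EReal)
    refine hcc.trans ?_
    rw [EReal.coe_le_coe_iff]
    have h1 : l * zr ≤ l * zs := mul_le_mul_of_nonneg_left hzr hl
    have h2 : (1 - l) * wr ≤ (1 - l) * ws := mul_le_mul_of_nonneg_left hwr hm
    linarith
  have hrisk_le : ∀ (W : X) (x : Fin N → ℝ), x ∈ P → W + V₁ x ∈ A →
      ρ W ≤ ((V₀ x : ℝ) : EReal) := by
    intro W x hx hA'
    exact sInf_le ⟨x, ⟨hx, hA'⟩, rfl⟩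
  have hfeas : ∀ (χ : X →L[ℝ] ℝ) (v : ℝ), (∀ (x : X) (s : ℝ), ρ x ≤ (s : EReal) → χ x ≤ v + s) →
      ∀ W ∈ A, ∀ x ∈ P, -v ≤ (-χ) W + (V₀ x - (-χ) (V₁ x)) := by
    intro χ v hχ W hW x hx
    have h1 : ρ (W - V₁ x) ≤ ((V₀ x : ℝ) : EReal) :=
      hrisk_le _ x hx (by rw [sub_add_cancel]; exact hW)
    have h2 := hχ _ _ h1
    rw [map_sub] at h2
    simp only [ContinuousLinearMap.neg_apply]
    linarith
  constructor
  · obtain ⟨χ, v, hχ⟩ := sep_base ρ hcl hcv Z₁ c hZ₁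
    exact ⟨-χ, (keyD A P V₀ V₁ hA0 hP0 hV₀0 hV₁0 (-χ) v (hfeas χ v hχ)).1⟩
  · intro Z
    apply le_antisymm
    · by_contra hcon
      push_neg at hcon
      obtain ⟨r, hr1, hr2⟩ := EReal.exists_between_coe_real hcon
      obtain ⟨χ, v, hχ, hrv⟩ := sep_main ρ hcl hcv Z₁ c hZ₁ Z r hr2
      obtain ⟨hmem, a, b, ha, hb, hab⟩ :=
        keyD A P V₀ V₁ hA0 hP0 hV₀0 hV₁0 (-χ) v (hfeas χ v hχ)
      have hgt : (r : EReal) < sigmaA A (-χ) + sigmaPV P V₀ V₁ (-χ) -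
          (((-χ) Z : ℝ) : EReal) := by
        rw [ha, hb, ContinuousLinearMap.neg_apply, ← EReal.coe_add, ← EReal.coe_sub,
          EReal.coe_lt_coe_iff]
        linarith
      have hle := le_iSup₂ (f := fun ψ (_ : ψ ∈ dualD A P V₀ V₁) =>
        sigmaA A ψ + sigmaPV P V₀ V₁ ψ - ((ψ Z : ℝ) : EReal)) (-χ) hmem
      exact (lt_irrefl _ (((hgt.trans_le hle).trans hr1))).elim
    · apply iSup₂_le
      intro ψ hψ
      apply le_sInf
      rintro y ⟨x, ⟨hx, hxA⟩, rfl⟩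
      obtain ⟨hAbot, hPbot⟩ := hψ
      have h1 : sigmaA A ψ ≤ ((ψ (Z + V₁ x) : ℝ) : EReal) := sInf_le ⟨_, hxA, rfl⟩
      have h2 : sigmaPV P V₀ V₁ ψ ≤ ((V₀ x - ψ (V₁ x) : ℝ) : EReal) := sInf_le ⟨x, hx, rfl⟩
      have hAtop : sigmaA A ψ ≠ ⊤ := (h1.trans_lt (EReal.coe_lt_top _)).ne
      have hPtop : sigmaPV P V₀ V₁ ψ ≠ ⊤ := (h2.trans_lt (EReal.coe_lt_top _)).ne
      have ha : sigmaA A ψ = (((sigmaA A ψ).toReal : ℝ) : EReal) :=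
        (EReal.coe_toReal hAtop hAbot).symm
      have hb : sigmaPV P V₀ V₁ ψ = (((sigmaPV P V₀ V₁ ψ).toReal : ℝ) : EReal) :=
        (EReal.coe_toReal hPtop hPbot).symm
      set a := (sigmaA A ψ).toReal
      set b := (sigmaPV P V₀ V₁ ψ).toReal
      rw [ha] at h1
      rw [hb] at h2
      have h1' : a ≤ ψ (Z + V₁ x) := by exact_mod_cast h1
      have h2' : b ≤ V₀ x - ψ (V₁ x) := by exact_mod_cast h2
      rw [map_add] at h1'
      show sigmaA A ψ + sigmaPV P V₀ V₁ ψ - ((ψ Z : ℝ) : EReal) ≤ ((V₀ x : ℝ) : EReal)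
      rw [ha, hb, ← EReal.coe_add, ← EReal.coe_sub, EReal.coe_le_coe_iff]
      linarith
end
end

section
/- If ρ is proper, quasiconvex, and lower semicontinuous, then ℬ is nonempty and for every X ∈ 𝒳 one has ρ(X) = sup over ψ ∈ ℬ of ρ(X|ψ). -/
open Topology Filter Set Pointwise

noncomputable section

theorem stmt5
    {X : Type*} [AddCommGroup X] [Module ℝ X] [TopologicalSpace X]
    [IsTopologicalAddGroup X] [ContinuousSMul ℝ X]
    [LocallyConvexSpace ℝ X] [T2Space X]
    (Xp : Set X) (hXp_cone : ∀ c : ℝ, 0 ≤ c → ∀ z ∈ Xp, c • z ∈ Xp)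
    (hXp_conv : Convex ℝ Xp)
    {N : ℕ} (hN : 1 ≤ N)
    (P : Set (Fin N → ℝ)) (hP0 : (0 : Fin N → ℝ) ∈ P)
    (V₀ : (Fin N → ℝ) → ℝ) (hV₀0 : V₀ 0 = 0) (hV₀sp : ∀ x, -V₀ (-x) ≤ V₀ x)
    (V₁ : (Fin N → ℝ) → X) (hV₁0 : V₁ 0 = 0) (hV₁sp : ∀ x, -V₁ (-x) - V₁ x ∈ Xp)
    (A : Set X) (hA0 : (0 : X) ∈ A) (hAmono : ∀ a ∈ A, ∀ p ∈ Xp, a + p ∈ A)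
    (hproper_bot : ∀ Z : X, riskM A P V₀ V₁ Z ≠ ⊥)
    (hproper_top : ∃ Z : X, riskM A P V₀ V₁ Z ≠ ⊤)
    (hqconv : ∀ l : ℝ, 0 ≤ l → l ≤ 1 → ∀ Z W : X,
      riskM A P V₀ V₁ (l • Z + (1 - l) • W) ≤
        max (riskM A P V₀ V₁ Z) (riskM A P V₀ V₁ W))
    (hlsc : LowerSemicontinuous (riskM A P V₀ V₁)) :
    {ψ : X →L[ℝ] ℝ | sigmaA A ψ ≠ ⊥}.Nonempty ∧
    ∀ Z : X, riskM A P V₀ V₁ Z =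
      ⨆ ψ ∈ {ψ : X →L[ℝ] ℝ | sigmaA A ψ ≠ ⊥},
        sInf (riskM A P V₀ V₁ '' {W : X | ψ W ≤ ψ Z}) := by
  classical
  set ρ := riskM A P V₀ V₁ with hρ
  -- 0 is in the barrier cone
  have h0B : (0 : X →L[ℝ] ℝ) ∈ {ψ : X →L[ℝ] ℝ | sigmaA A ψ ≠ ⊥} := by
    have himg : ((fun Z => (((0 : X →L[ℝ] ℝ) Z : ℝ) : EReal)) '' A) = {(0 : EReal)} := by
      ext y
      constructor
      · rintro ⟨a, -, rfl⟩; simp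
      · rintro rfl; exact ⟨0, hA0, by simp⟩
    simp only [mem_setOf_eq, sigmaA, himg, sInf_singleton]
    exact fun h => by simp at h
  refine ⟨⟨0, h0B⟩, fun Z => ?_⟩
  -- closedness of sublevel sets
  have hclosed : ∀ r : EReal, IsClosed {W : X | ρ W ≤ r} := by
    intro r
    rw [← isOpen_compl_iff, isOpen_iff_mem_nhds]
    intro W hW
    simp only [mem_compl_iff, mem_setOf_eq, not_le] at hW
    filter_upwards [hlsc W r hW] with W' hW'
    simp only [mem_compl_iff, mem_setOf_eq, not_le]
    exact hW'
  -- convexity of sublevel sets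
  have hconv : ∀ r : EReal, Convex ℝ {W : X | ρ W ≤ r} := by
    intro r W₁ h₁ W₂ h₂ a b ha hb hab
    have hb' : b = 1 - a := by linarith
    have hq := hqconv a ha (by linarith) W₁ W₂
    simp only [mem_setOf_eq] at h₁ h₂ ⊢
    calc ρ (a • W₁ + b • W₂) = ρ (a • W₁ + (1 - a) • W₂) := by rw [hb']
      _ ≤ max (ρ W₁) (ρ W₂) := hq
      _ ≤ r := max_le h₁ h₂
  -- key monotonicity-type fact
  have hkey : ∀ a ∈ A, ∀ x₀ ∈ P, ρ (a - V₁ x₀) ≤ ((V₀ x₀ : ℝ) : EReal) := by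
    intro a ha x₀ hx₀
    refine sInf_le ⟨x₀, ⟨hx₀, ?_⟩, rfl⟩
    simpa [sub_add_cancel] using ha
  apply le_antisymm
  · -- hard direction, by contradiction
    by_contra hcon
    rw [not_le] at hcon
    obtain ⟨c, hc1, hc2⟩ := exists_between hcon
    obtain ⟨d, hd1, hd2⟩ := exists_between hc2
    by_cases hS₁ : {W : X | ρ W ≤ c}.Nonempty
    · -- nonempty sublevel set at c; separate Z from the sublevel set at d
      obtain ⟨Y₀, hY₀⟩ := hS₁
      have hlt : sInf ((fun x => ((V₀ x : ℝ) : EReal)) '' {x | x ∈ P ∧ Y₀ + V₁ x ∈ A}) < d :=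
        lt_of_le_of_lt hY₀ hd1
      rw [sInf_lt_iff] at hlt
      obtain ⟨y, hy, hylt⟩ := hlt
      obtain ⟨x₀, ⟨hx₀P, hx₀A⟩, rfl⟩ := hy
      have hZd : Z ∉ {W : X | ρ W ≤ d} := by
        simp only [mem_setOf_eq, not_le]; exact hd2
      obtain ⟨ψ, u, hψZ, hψS⟩ :=
        geometric_hahn_banach_point_closed (hconv d) (hclosed d) hZd
      have hψB : ψ ∈ {ψ : X →L[ℝ] ℝ | sigmaA A ψ ≠ ⊥} := by
        have hge : ((u + ψ (V₁ x₀) : ℝ) : EReal) ≤ sigmaA A ψ := by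
          apply le_sInf
          rintro y ⟨a, ha, rfl⟩
          have hmemS : a - V₁ x₀ ∈ {W : X | ρ W ≤ d} :=
            le_trans (hkey a ha x₀ hx₀P) (le_of_lt hylt)
          have := hψS _ hmemS
          rw [map_sub] at this
          show ((u + ψ (V₁ x₀) : ℝ) : EReal) ≤ ((ψ a : ℝ) : EReal)
          exact_mod_cast le_of_lt (by linarith : u + ψ (V₁ x₀) < ψ a)
        simp only [mem_setOf_eq]
        intro hbot
        rw [hbot] at hge
        exact absurd hge (by simp)
      have hterm : (d : EReal) ≤ sInf (ρ '' {W : X | ψ W ≤ ψ Z}) := by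
        apply le_sInf
        rintro y ⟨W, hW, rfl⟩
        simp only [mem_setOf_eq] at hW
        by_contra hy
        rw [not_le] at hy
        have hWS : W ∈ {W : X | ρ W ≤ d} := le_of_lt hy
        have := hψS W hWS
        linarith [hψZ]
      have hle : sInf (ρ '' {W : X | ψ W ≤ ψ Z}) ≤
          ⨆ ψ ∈ {ψ : X →L[ℝ] ℝ | sigmaA A ψ ≠ ⊥},
            sInf (ρ '' {W : X | ψ W ≤ ψ Z}) :=
        le_biSup (fun ψ => sInf (ρ '' {W : X | ψ W ≤ ψ Z})) hψB
      exact absurd (lt_of_le_of_lt (hterm.trans hle) (hc1.trans hd1)) (lt_irrefl _)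
    · -- empty sublevel set at c: use ψ = 0
      have hterm : (c : EReal) ≤ sInf (ρ '' {W : X | (0 : X →L[ℝ] ℝ) W ≤ (0 : X →L[ℝ] ℝ) Z}) := by
        apply le_sInf
        rintro y ⟨W, -, rfl⟩
        by_contra hy
        rw [not_le] at hy
        exact hS₁ ⟨W, le_of_lt hy⟩
      have hle : sInf (ρ '' {W : X | (0 : X →L[ℝ] ℝ) W ≤ (0 : X →L[ℝ] ℝ) Z}) ≤
          ⨆ ψ ∈ {ψ : X →L[ℝ] ℝ | sigmaA A ψ ≠ ⊥},
            sInf (ρ '' {W : X | ψ W ≤ ψ Z}) :=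
        le_biSup (fun ψ => sInf (ρ '' {W : X | ψ W ≤ ψ Z})) h0B
      exact absurd (lt_of_le_of_lt (hterm.trans hle) hc1) (lt_irrefl _)
  · apply iSup₂_le
    intro ψ _
    refine sInf_le ⟨Z, ?_, rfl⟩
    simp only [mem_setOf_eq, le_refl]
end
end

section
/- Assume that 𝒜 is convex and closed, 𝒫 is convex and closed, V₀ is convex and lower semicontinuous, and V₁ is superlinear (positively homogeneous: V₁(λx) = λV₁(x) for all λ ≥ 0 and x, and superadditive: V₁(x+y) ≥ V₁(x) + V₁(y) for all x, y). Then 𝒩 := ℒ ∩ (−ℒ) is a linear subspace of ℝ^N, and for every (X,m) ∈ 𝒞 there exists x ∈ 𝒫 lying in the orthogonal complement of 𝒩 within span(𝒫) such that V₀(x) ≤ m and X + V₁(x) ∈ 𝒜. -/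
open Topology Filter Set Pointwise

noncomputable section

section aux
variable {E : Type*} [AddCommGroup E] [Module ℝ E] [TopologicalSpace E]
  [IsTopologicalAddGroup E] [ContinuousSMul ℝ E]

/-- For a closed convex set containing `0`, the asymptotic cone is the recession cone. -/
lemma asymCone_eq (C : Set E) (hconv : Convex ℝ C) (hcl : IsClosed C) (h0 : (0:E) ∈ C) :
    asymCone C = {z | ∀ t : ℝ, 0 ≤ t → t • z ∈ C} := by
  ext z
  constructor
  · intro hz t ht
    rcases eq_or_lt_of_le ht with rfl | ht
    · simpa using h0
    · have hcls : t • z ∈ closure C := by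
        rw [mem_closure_iff_nhds]
        intro U hU
        have hU' : (fun y : E => t • y) ⁻¹' U ∈ 𝓝 z := by
          have hc : Continuous fun y : E => t • y := continuous_const_smul t
          exact hc.continuousAt.preimage_mem_nhds (by simpa using hU)
        obtain ⟨c, hc, l, hl0, hlt, hmem⟩ := hz _ hU' (1/t) (by positivity)
        refine ⟨t • (l • c), hmem, ?_⟩
        rw [smul_smul]
        have h1 : t * l < 1 := by
          have h2 := mul_lt_mul_of_pos_left hlt ht
          calc t * l < t * (1/t) := h2
            _ = 1 := by field_simp
        have h0' : 0 ≤ t * l := mul_nonneg ht.le hl0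
        have := hconv h0 hc (by linarith : (0:ℝ) ≤ 1 - t*l) h0' (by ring)
        simpa using this
      rwa [hcl.closure_eq] at hcls
  · intro hz U hU ε hε
    refine ⟨(2/ε) • z, hz _ (by positivity), ε/2, by positivity, by linarith, ?_⟩
    rw [smul_smul]
    have h : ε/2 * (2/ε) = 1 := by field_simp
    rw [h, one_smul]; exact mem_of_mem_nhds hU

/-- A closed convex set absorbs its recession cone additively. -/
lemma add_rec_mem {C : Set E} (hconv : Convex ℝ C) (hcl : IsClosed C) {c z : E}
    (hc : c ∈ C) (hz : ∀ t : ℝ, 0 ≤ t → t • z ∈ C) : c + z ∈ C := by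
  have htend : Tendsto (fun n : ℕ => (1 - 1/(n+1) : ℝ) • c + z) atTop (𝓝 (c + z)) := by
    have h1 : Tendsto (fun n : ℕ => (1 - 1/(n+1) : ℝ)) atTop (𝓝 1) := by
      have h := tendsto_one_div_add_atTop_nhds_zero_nat (𝕜 := ℝ)
      simpa using (tendsto_const_nhds (x := (1:ℝ)).sub h)
    have h2 : Tendsto (fun n : ℕ => (1 - 1/(n+1) : ℝ) • c) atTop (𝓝 ((1:ℝ) • c)) :=
      h1.smul tendsto_const_nhds
    simpa using h2.add (tendsto_const_nhds (x := z))
  have hmem : ∀ n : ℕ, (1 - 1/(n+1) : ℝ) • c + z ∈ C := by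
    intro n
    have hpos : (0:ℝ) < 1/(n+1) := by positivity
    have hle : (1/(n+1):ℝ) ≤ 1 := by
      rw [div_le_one (by positivity)]; linarith [Nat.cast_nonneg (α := ℝ) n]
    have hw : ((n+1:ℝ)) • z ∈ C := hz _ (by positivity)
    have hcv := hconv hc hw (by linarith : (0:ℝ) ≤ 1 - 1/(n+1)) hpos.le (by ring)
    rw [smul_smul] at hcv
    have he : (1/(n+1):ℝ) * (n+1) = 1 := by field_simp
    rw [he, one_smul] at hcv
    exact hcv
  exact hcl.mem_of_tendsto htend (Eventually.of_forall hmem)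

end aux

theorem stmt8
    {X : Type*} [AddCommGroup X] [Module ℝ X] [TopologicalSpace X]
    [IsTopologicalAddGroup X] [ContinuousSMul ℝ X]
    (Xp : Set X) (hXp_cone : ∀ c : ℝ, 0 ≤ c → ∀ z ∈ Xp, c • z ∈ Xp)
    (hXp_conv : Convex ℝ Xp)
    {N : ℕ} (hN : 1 ≤ N)
    (P : Set (Fin N → ℝ)) (hP0 : (0 : Fin N → ℝ) ∈ P)
    (V₀ : (Fin N → ℝ) → ℝ) (hV₀0 : V₀ 0 = 0) (hV₀sp : ∀ x, -V₀ (-x) ≤ V₀ x)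
    (V₁ : (Fin N → ℝ) → X) (hV₁0 : V₁ 0 = 0) (hV₁sp : ∀ x, -V₁ (-x) - V₁ x ∈ Xp)
    (A : Set X) (hA0 : (0 : X) ∈ A) (hAmono : ∀ a ∈ A, ∀ p ∈ Xp, a + p ∈ A)
    (hAconv : Convex ℝ A) (hAcl : IsClosed A)
    (hPconv : Convex ℝ P) (hPcl : IsClosed P)
    (hV₀conv : ConvexOn ℝ Set.univ V₀) (hV₀lsc : LowerSemicontinuous V₀)
    (hV₁hom : ∀ c : ℝ, 0 ≤ c → ∀ x, V₁ (c • x) = c • V₁ x)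
    (hV₁super : ∀ x y, V₁ (x + y) - (V₁ x + V₁ y) ∈ Xp) :
    (∃ S : Submodule ℝ (Fin N → ℝ),
      (S : Set (Fin N → ℝ)) = Lset A P V₀ V₁ ∩ (-(Lset A P V₀ V₁))) ∧
    ∀ Z : X, ∀ m : ℝ, (∃ x ∈ P, V₀ x ≤ m ∧ Z + V₁ x ∈ A) →
      ∃ x ∈ P, x ∈ Submodule.span ℝ P ∧
        (∀ y ∈ Lset A P V₀ V₁ ∩ (-(Lset A P V₀ V₁)), ∑ i, x i * y i = 0) ∧
        V₀ x ≤ m ∧ Z + V₁ x ∈ A := by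
  -- characterizations of the asymptotic cones
  have hPeq := asymCone_eq P hPconv hPcl hP0
  have hAeq := asymCone_eq A hAconv hAcl hA0
  have hepi_conv : Convex ℝ (epigraph V₀) := by
    intro a ha b hb s t hs ht hst
    simp only [epigraph, mem_setOf_eq] at ha hb ⊢
    have h := hV₀conv.2 (mem_univ a.1) (mem_univ b.1) hs ht hst
    have h2 : V₀ (s • a.1 + t • b.1) ≤ s * V₀ a.1 + t * V₀ b.1 := by
      simpa [smul_eq_mul] using h
    have h3 : s * V₀ a.1 + t * V₀ b.1 ≤ s * a.2 + t * b.2 := by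
      gcongr
    exact le_trans h2 h3
  have hepi_cl : IsClosed (epigraph V₀) := by
    rw [← isOpen_compl_iff, isOpen_iff_mem_nhds]
    rintro ⟨a, r⟩ hp
    simp only [mem_compl_iff, epigraph, mem_setOf_eq, not_le] at hp
    obtain ⟨y, hy1, hy2⟩ := exists_between hp
    have h1 : {x' | y < V₀ x'} ∈ 𝓝 a := hV₀lsc a y hy2
    have h2 : {x' | y < V₀ x'} ×ˢ Iio y ∈ 𝓝 (a, r) := prod_mem_nhds h1 (Iio_mem_nhds hy1)
    filter_upwards [h2] with q hq
    simp only [mem_prod, mem_setOf_eq, mem_Iio] at hq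
    simp only [mem_compl_iff, epigraph, mem_setOf_eq, not_le]
    exact lt_trans hq.2 hq.1
  have h0epi : (0 : (Fin N → ℝ) × ℝ) ∈ epigraph V₀ := by
    simp [epigraph, hV₀0]
  have hEeq := asymCone_eq (epigraph V₀) hepi_conv hepi_cl h0epi
  -- characterization of `Lset`
  have hL : ∀ x : Fin N → ℝ, x ∈ Lset A P V₀ V₁ ↔
      (∀ t : ℝ, 0 ≤ t → t • x ∈ P) ∧ (∀ t : ℝ, 0 ≤ t → V₀ (t • x) ≤ 0) ∧
      (∀ t : ℝ, 0 ≤ t → t • V₁ x ∈ A) := by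
    intro x
    simp only [Lset, mem_setOf_eq, hPeq, hAeq, hEeq]
    constructor
    · rintro ⟨h1, h2, h3⟩
      refine ⟨h1, fun t ht => ?_, h3⟩
      have := h2 t ht
      simpa [epigraph, Prod.smul_mk, smul_eq_mul] using this
    · rintro ⟨h1, h2, h3⟩
      refine ⟨h1, fun t ht => ?_, h3⟩
      simpa [epigraph, Prod.smul_mk, smul_eq_mul] using h2 t ht
  -- closure properties of `Lset`
  have haddL : ∀ x y, x ∈ Lset A P V₀ V₁ → y ∈ Lset A P V₀ V₁ →
      x + y ∈ Lset A P V₀ V₁ := by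
    intro x y hx hy
    rw [hL] at hx hy ⊢
    obtain ⟨hx1, hx2, hx3⟩ := hx
    obtain ⟨hy1, hy2, hy3⟩ := hy
    have key : ∀ t : ℝ, 0 ≤ t → (0:ℝ) ≤ 2 * t := by intro t ht; linarith
    refine ⟨fun t ht => ?_, fun t ht => ?_, fun t ht => ?_⟩
    · have h := hPconv (hx1 (2*t) (key t ht)) (hy1 (2*t) (key t ht))
        (by norm_num : (0:ℝ) ≤ 1/2) (by norm_num : (0:ℝ) ≤ 1/2) (by norm_num)
      have he : ((1:ℝ)/2) • ((2*t) • x) + ((1:ℝ)/2) • ((2*t) • y) = t • (x + y) := by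
        rw [smul_smul, smul_smul, smul_add, show (1/2:ℝ)*(2*t) = t by ring]
      rwa [he] at h
    · have h := hV₀conv.2 (mem_univ ((2*t) • x)) (mem_univ ((2*t) • y))
        (by norm_num : (0:ℝ) ≤ 1/2) (by norm_num : (0:ℝ) ≤ 1/2) (by norm_num)
      have he : ((1:ℝ)/2) • ((2*t) • x) + ((1:ℝ)/2) • ((2*t) • y) = t • (x + y) := by
        rw [smul_smul, smul_smul, smul_add, show (1/2:ℝ)*(2*t) = t by ring]
      rw [he] at h
      have h2 := hx2 (2*t) (key t ht)
      have h3 := hy2 (2*t) (key t ht)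
      simp only [smul_eq_mul] at h
      linarith
    · have hp := hV₁super x y
      have hsum : V₁ (x + y) = (V₁ x + V₁ y) + (V₁ (x + y) - (V₁ x + V₁ y)) := by abel
      have hin : t • (V₁ x + V₁ y) ∈ A := by
        have h := hAconv (hx3 (2*t) (key t ht)) (hy3 (2*t) (key t ht))
          (by norm_num : (0:ℝ) ≤ 1/2) (by norm_num : (0:ℝ) ≤ 1/2) (by norm_num)
        have he : ((1:ℝ)/2) • ((2*t) • V₁ x) + ((1:ℝ)/2) • ((2*t) • V₁ y)
            = t • (V₁ x + V₁ y) := by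
          rw [smul_smul, smul_smul, smul_add, show (1/2:ℝ)*(2*t) = t by ring]
        rwa [he] at h
      have := hAmono _ hin _ (hXp_cone t ht _ hp)
      rw [hsum, smul_add]
      exact this
  have hsmulL : ∀ c : ℝ, 0 ≤ c → ∀ x, x ∈ Lset A P V₀ V₁ → c • x ∈ Lset A P V₀ V₁ := by
    intro c hc x hx
    rw [hL] at hx ⊢
    obtain ⟨hx1, hx2, hx3⟩ := hx
    refine ⟨fun t ht => ?_, fun t ht => ?_, fun t ht => ?_⟩
    · rw [smul_smul]; exact hx1 _ (mul_nonneg ht hc)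
    · rw [smul_smul]; exact hx2 _ (mul_nonneg ht hc)
    · rw [hV₁hom c hc, smul_smul]; exact hx3 _ (mul_nonneg ht hc)
  have hzeroL : (0 : Fin N → ℝ) ∈ Lset A P V₀ V₁ := by
    rw [hL]
    refine ⟨fun t ht => by simpa using hP0, fun t ht => by simpa [hV₀0] using le_refl (0:ℝ),
      fun t ht => by simpa [hV₁0] using hA0⟩
  -- the submodule
  let S : Submodule ℝ (Fin N → ℝ) :=
    { carrier := Lset A P V₀ V₁ ∩ (-(Lset A P V₀ V₁))
      add_mem' := by
        rintro a b ⟨ha1, ha2⟩ ⟨hb1, hb2⟩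
        rw [Set.mem_neg] at ha2 hb2
        refine ⟨haddL a b ha1 hb1, ?_⟩
        rw [Set.mem_neg, neg_add]
        exact haddL _ _ ha2 hb2
      zero_mem' := by
        refine ⟨hzeroL, ?_⟩
        rw [Set.mem_neg, neg_zero]
        exact hzeroL
      smul_mem' := by
        intro c x hx
        obtain ⟨hx1, hx2⟩ := hx
        rw [Set.mem_neg] at hx2
        rcases le_or_gt 0 c with hc | hc
        · refine ⟨hsmulL c hc x hx1, ?_⟩
          rw [Set.mem_neg, ← smul_neg]
          exact hsmulL c hc _ hx2
        · have hc' : (0:ℝ) ≤ -c := by linarith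
          have he : c • x = (-c) • (-x) := by rw [smul_neg, neg_smul, neg_neg]
          refine ⟨?_, ?_⟩
          · rw [he]; exact hsmulL _ hc' _ hx2
          · rw [Set.mem_neg, he, ← smul_neg, neg_neg]
            exact hsmulL _ hc' _ hx1 }
  refine ⟨⟨S, rfl⟩, ?_⟩
  -- main part
  rintro Z m ⟨x, hxP, hxm, hxA⟩
  -- orthogonal decomposition in Euclidean space
  let e : (Fin N → ℝ) ≃ₗ[ℝ] EuclideanSpace ℝ (Fin N) :=
    (WithLp.linearEquiv 2 ℝ (Fin N → ℝ)).symm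
  let K : Submodule ℝ (EuclideanSpace ℝ (Fin N)) := S.map (e : (Fin N → ℝ) →ₗ[ℝ] _)
  obtain ⟨y, hyK, z, hzK, hxyz⟩ := K.exists_add_mem_mem_orthogonal (e x)
  obtain ⟨n, hnS, hen0⟩ := hyK
  have hen : e n = y := hen0
  -- facts about n
  have hnL : n ∈ Lset A P V₀ V₁ := hnS.1
  have hnL' : -n ∈ Lset A P V₀ V₁ := by
    have := hnS.2
    rwa [Set.mem_neg] at this
  rw [hL] at hnL hnL'
  set w : Fin N → ℝ := x - n with hw_def
  have hwxn : w = x + (-n) := by rw [hw_def, sub_eq_add_neg]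
  -- (a) w ∈ P
  have hwP : w ∈ P := by
    rw [hwxn]
    exact add_rec_mem hPconv hPcl hxP hnL'.1
  -- (b) w ∈ span
  have hnP : n ∈ P := by simpa using hnL.1 1 zero_le_one
  have hwspan : w ∈ Submodule.span ℝ P :=
    Submodule.sub_mem _ (Submodule.subset_span hxP) (Submodule.subset_span hnP)
  -- (c) orthogonality
  have hew : e w = z := by
    have : e w = e x - e n := by rw [hw_def, map_sub]
    rw [this, hxyz, hen]
    abel
  have horth : ∀ y0 ∈ Lset A P V₀ V₁ ∩ (-(Lset A P V₀ V₁)), ∑ i, w i * y0 i = 0 := by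
    intro y0 hy0
    have hy0S : y0 ∈ S := hy0
    have hy0K : e y0 ∈ K := ⟨y0, hy0S, rfl⟩
    have h0 : (inner ℝ (e y0) z : ℝ) = 0 := (Submodule.mem_orthogonal K z).mp hzK _ hy0K
    rw [← hew] at h0
    have hinner : (inner ℝ (e y0) (e w) : ℝ) = ∑ i, y0 i * w i := by
      simp [PiLp.inner_apply, RCLike.inner_apply]
      exact Finset.sum_congr rfl fun i _ => mul_comm _ _
    rw [hinner] at h0
    calc ∑ i, w i * y0 i = ∑ i, y0 i * w i := by
          apply Finset.sum_congr rfl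
          intro i _
          ring
      _ = 0 := h0
  -- (d) V₀ w ≤ m
  have hrec_epi : ∀ t : ℝ, 0 ≤ t → t • ((-n : Fin N → ℝ), (0:ℝ)) ∈ epigraph V₀ := by
    intro t ht
    simpa [epigraph, Prod.smul_mk, smul_eq_mul] using hnL'.2.1 t ht
  have hwV₀ : V₀ w ≤ m := by
    have hmem : ((x : Fin N → ℝ), V₀ x) + ((-n : Fin N → ℝ), (0:ℝ)) ∈ epigraph V₀ :=
      add_rec_mem hepi_conv hepi_cl (by exact le_refl (V₀ x)) hrec_epi
    have : V₀ (x + (-n)) ≤ V₀ x + 0 := hmem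
    rw [← hwxn] at this
    linarith
  -- (e) Z + V₁ w ∈ A
  have hwA : Z + V₁ w ∈ A := by
    have hp := hV₁super x (-n)
    have h1 : (Z + V₁ x) + V₁ (-n) ∈ A :=
      add_rec_mem hAconv hAcl hxA hnL'.2.2
    have h2 := hAmono _ h1 _ hp
    have he : (Z + V₁ x) + V₁ (-n) + (V₁ (x + (-n)) - (V₁ x + V₁ (-n)))
        = Z + V₁ (x + (-n)) := by abel
    rw [he, ← hwxn] at h2
    exact h2
  exact ⟨w, hwP, hwspan, horth, hwV₀, hwA⟩
end
end

section
/- If 𝒜 and 𝒫 are star shaped, V₀ is star shaped, and V₁ is anti-star shaped, then ρ is star shaped; equivalently, ρ(λX) ≥ λρ(X) for every λ ≥ 1 and every X ∈ 𝒳 (in the extended reals). -/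
open Topology Filter Set Pointwise

noncomputable section

theorem stmt10
    {X : Type*} [AddCommGroup X] [Module ℝ X] [TopologicalSpace X]
    [IsTopologicalAddGroup X] [ContinuousSMul ℝ X]
    (Xp : Set X) (hXp_cone : ∀ c : ℝ, 0 ≤ c → ∀ z ∈ Xp, c • z ∈ Xp)
    (hXp_conv : Convex ℝ Xp)
    {N : ℕ} (hN : 1 ≤ N)
    (P : Set (Fin N → ℝ)) (hP0 : (0 : Fin N → ℝ) ∈ P)
    (V₀ : (Fin N → ℝ) → ℝ) (hV₀0 : V₀ 0 = 0) (hV₀sp : ∀ x, -V₀ (-x) ≤ V₀ x)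
    (V₁ : (Fin N → ℝ) → X) (hV₁0 : V₁ 0 = 0) (hV₁sp : ∀ x, -V₁ (-x) - V₁ x ∈ Xp)
    (A : Set X) (hA0 : (0 : X) ∈ A) (hAmono : ∀ a ∈ A, ∀ p ∈ Xp, a + p ∈ A)
    (hAstar : ∀ l : ℝ, 0 ≤ l → l ≤ 1 → ∀ a ∈ A, l • a ∈ A)
    (hPstar : ∀ l : ℝ, 0 ≤ l → l ≤ 1 → ∀ x ∈ P, l • x ∈ P)
    (hV₀star : ∀ l : ℝ, 0 ≤ l → l ≤ 1 → ∀ x, V₀ (l • x) ≤ l * V₀ x)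
    (hV₁anti : ∀ l : ℝ, 0 ≤ l → l ≤ 1 → ∀ x, V₁ (l • x) - l • V₁ x ∈ Xp) :
    ∀ l : ℝ, 1 ≤ l → ∀ Z : X,
      (l : EReal) * riskM A P V₀ V₁ Z ≤ riskM A P V₀ V₁ (l • Z) := by
  intro l hl Z
  have hl0 : (0:ℝ) < l := lt_of_lt_of_le one_pos hl
  apply le_sInf
  rintro b ⟨x, ⟨hxP, hxA⟩, rfl⟩
  -- λ = 1/l
  set lam : ℝ := l⁻¹ with hlam
  have hlam0 : 0 ≤ lam := le_of_lt (inv_pos.2 hl0)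
  have hlam1 : lam ≤ 1 := inv_le_one_of_one_le₀ hl
  have hfeas : lam • x ∈ P := hPstar lam hlam0 hlam1 x hxP
  have hmem : Z + V₁ (lam • x) ∈ A := by
    have h1 : lam • (l • Z + V₁ x) ∈ A := hAstar lam hlam0 hlam1 _ hxA
    have h2 : lam • (l • Z + V₁ x) = Z + lam • V₁ x := by
      rw [smul_add, smul_smul, hlam, inv_mul_cancel₀ (ne_of_gt hl0), one_smul]
    rw [h2] at h1
    have h3 := hAmono _ h1 _ (hV₁anti lam hlam0 hlam1 x)
    have h4 : Z + lam • V₁ x + (V₁ (lam • x) - lam • V₁ x) = Z + V₁ (lam • x) := by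
      abel
    rwa [h4] at h3
  have hrle : riskM A P V₀ V₁ Z ≤ ((V₀ (lam • x) : ℝ) : EReal) :=
    sInf_le ⟨lam • x, ⟨hfeas, hmem⟩, rfl⟩
  calc (l : EReal) * riskM A P V₀ V₁ Z
      ≤ (l : EReal) * ((V₀ (lam • x) : ℝ) : EReal) :=
        mul_le_mul_of_nonneg_left hrle (by exact_mod_cast le_of_lt hl0)
    _ = ((l * V₀ (lam • x) : ℝ) : EReal) := by rw [EReal.coe_mul]
    _ ≤ ((V₀ x : ℝ) : EReal) := by
        apply EReal.coe_le_coe_iff.2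
        have := hV₀star lam hlam0 hlam1 x
        calc l * V₀ (lam • x) ≤ l * (lam * V₀ x) :=
              mul_le_mul_of_nonneg_left this (le_of_lt hl0)
          _ = V₀ x := by
              rw [← mul_assoc, hlam, mul_inv_cancel₀ (ne_of_gt hl0), one_mul]
end
end

section
/- If 𝒜 and 𝒫 are cones and V₀ and V₁ are positively homogeneous (f(λx) = λf(x) for all λ ≥ 0 and x), then ρ is positively homogeneous: ρ(λX) = λρ(X) for every λ > 0 and every X ∈ 𝒳 (in the extended reals). -/
open Topology Filter Set Pointwise

noncomputable section

lemma erealMulCancel (l : ℝ) (hl : 0 < l) (y : EReal) :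
    ((l⁻¹ : ℝ) : EReal) * ((l : EReal) * y) = y := by
  rw [← mul_assoc, ← EReal.coe_mul, inv_mul_cancel₀ hl.ne', EReal.coe_one, one_mul]

noncomputable def erealMulIso (l : ℝ) (hl : 0 < l) : EReal ≃o EReal where
  toFun y := (l : EReal) * y
  invFun y := ((l⁻¹ : ℝ) : EReal) * y
  left_inv y := erealMulCancel l hl y
  right_inv y := by
    have := erealMulCancel l⁻¹ (inv_pos.mpr hl) y
    rwa [inv_inv] at this
  map_rel_iff' := by
    intro a b
    simp only [Equiv.coe_fn_mk]
    constructor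
    · intro h
      have := mul_le_mul_of_nonneg_left h
        (le_of_lt (by exact_mod_cast inv_pos.mpr hl : (0:EReal) < ((l⁻¹:ℝ):EReal)))
      rwa [erealMulCancel l hl, erealMulCancel l hl] at this
    · intro h
      exact mul_le_mul_of_nonneg_left h (le_of_lt (by exact_mod_cast hl))

theorem stmt11
    {X : Type*} [AddCommGroup X] [Module ℝ X] [TopologicalSpace X]
    [IsTopologicalAddGroup X] [ContinuousSMul ℝ X]
    (Xp : Set X) (hXp_cone : ∀ c : ℝ, 0 ≤ c → ∀ z ∈ Xp, c • z ∈ Xp)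
    (hXp_conv : Convex ℝ Xp)
    {N : ℕ} (hN : 1 ≤ N)
    (P : Set (Fin N → ℝ)) (hP0 : (0 : Fin N → ℝ) ∈ P)
    (V₀ : (Fin N → ℝ) → ℝ) (hV₀0 : V₀ 0 = 0) (hV₀sp : ∀ x, -V₀ (-x) ≤ V₀ x)
    (V₁ : (Fin N → ℝ) → X) (hV₁0 : V₁ 0 = 0) (hV₁sp : ∀ x, -V₁ (-x) - V₁ x ∈ Xp)
    (A : Set X) (hA0 : (0 : X) ∈ A) (hAmono : ∀ a ∈ A, ∀ p ∈ Xp, a + p ∈ A)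
    (hAcone : ∀ c : ℝ, 0 ≤ c → ∀ a ∈ A, c • a ∈ A)
    (hPcone : ∀ c : ℝ, 0 ≤ c → ∀ x ∈ P, c • x ∈ P)
    (hV₀hom : ∀ c : ℝ, 0 ≤ c → ∀ x, V₀ (c • x) = c * V₀ x)
    (hV₁hom : ∀ c : ℝ, 0 ≤ c → ∀ x, V₁ (c • x) = c • V₁ x) :
    ∀ l : ℝ, 0 < l → ∀ Z : X,
      riskM A P V₀ V₁ (l • Z) = (l : EReal) * riskM A P V₀ V₁ Z := by
  intro l hl Z
  unfold riskM
  have hset : ((fun x => ((V₀ x : ℝ) : EReal)) '' {x | x ∈ P ∧ l • Z + V₁ x ∈ A})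
      = ((l : EReal) * ·) '' ((fun x => ((V₀ x : ℝ) : EReal)) '' {x | x ∈ P ∧ Z + V₁ x ∈ A}) := by
    ext y
    constructor
    · rintro ⟨x, ⟨hxP, hxA⟩, rfl⟩
      refine ⟨(V₀ (l⁻¹ • x) : ℝ), ⟨l⁻¹ • x, ⟨hPcone l⁻¹ (inv_nonneg.mpr hl.le) x hxP, ?_⟩, rfl⟩, ?_⟩
      · have : Z + V₁ (l⁻¹ • x) = l⁻¹ • (l • Z + V₁ x) := by
          rw [hV₁hom l⁻¹ (inv_nonneg.mpr hl.le) x, smul_add, smul_smul,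
            inv_mul_cancel₀ hl.ne', one_smul]
        rw [this]
        exact hAcone l⁻¹ (inv_nonneg.mpr hl.le) _ hxA
      · have hx : l • (l⁻¹ • x) = x := by
          rw [smul_smul, mul_inv_cancel₀ hl.ne', one_smul]
        have := hV₀hom l hl.le (l⁻¹ • x)
        rw [hx] at this
        simp [this, EReal.coe_mul]
    · rintro ⟨_, ⟨x, ⟨hxP, hxA⟩, rfl⟩, rfl⟩
      refine ⟨l • x, ⟨hPcone l hl.le x hxP, ?_⟩, ?_⟩
      · have : l • Z + V₁ (l • x) = l • (Z + V₁ x) := by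
          rw [hV₁hom l hl.le x, smul_add]
        rw [this]
        exact hAcone l hl.le _ hxA
      · simp [hV₀hom l hl.le x, EReal.coe_mul]
  rw [hset]
  exact (map_sInf (erealMulIso l hl) _).symm
end
end

section
/- If 𝒜 and 𝒫 are convex, V₀ is quasiconvex (V₀(λx + (1−λ)y) ≤ max{V₀(x), V₀(y)} for all λ ∈ [0,1] and x, y), and V₁ is concave (V₁(λx + (1−λ)y) ≥ λV₁(x) + (1−λ)V₁(y) for all λ ∈ [0,1] and x, y), then ρ is quasiconvex: ρ(λX + (1−λ)Y) ≤ max{ρ(X), ρ(Y)} for all λ ∈ [0,1] and all X, Y ∈ 𝒳. -/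
open Topology Filter Set Pointwise

noncomputable section

theorem stmt12
    {X : Type*} [AddCommGroup X] [Module ℝ X] [TopologicalSpace X]
    [IsTopologicalAddGroup X] [ContinuousSMul ℝ X]
    (Xp : Set X) (hXp_cone : ∀ c : ℝ, 0 ≤ c → ∀ z ∈ Xp, c • z ∈ Xp)
    (hXp_conv : Convex ℝ Xp)
    {N : ℕ} (hN : 1 ≤ N)
    (P : Set (Fin N → ℝ)) (hP0 : (0 : Fin N → ℝ) ∈ P)
    (V₀ : (Fin N → ℝ) → ℝ) (hV₀0 : V₀ 0 = 0) (hV₀sp : ∀ x, -V₀ (-x) ≤ V₀ x)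
    (V₁ : (Fin N → ℝ) → X) (hV₁0 : V₁ 0 = 0) (hV₁sp : ∀ x, -V₁ (-x) - V₁ x ∈ Xp)
    (A : Set X) (hA0 : (0 : X) ∈ A) (hAmono : ∀ a ∈ A, ∀ p ∈ Xp, a + p ∈ A)
    (hAconv : Convex ℝ A) (hPconv : Convex ℝ P)
    (hV₀qconv : ∀ l : ℝ, 0 ≤ l → l ≤ 1 → ∀ x y,
      V₀ (l • x + (1 - l) • y) ≤ max (V₀ x) (V₀ y))
    (hV₁conc : ∀ l : ℝ, 0 ≤ l → l ≤ 1 → ∀ x y,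
      V₁ (l • x + (1 - l) • y) - (l • V₁ x + (1 - l) • V₁ y) ∈ Xp) :
    ∀ l : ℝ, 0 ≤ l → l ≤ 1 → ∀ Z W : X,
      riskM A P V₀ V₁ (l • Z + (1 - l) • W) ≤
        max (riskM A P V₀ V₁ Z) (riskM A P V₀ V₁ W) := by
  intro l hl0 hl1 Z W
  by_contra hcon
  push_neg at hcon
  have h1 : riskM A P V₀ V₁ Z < riskM A P V₀ V₁ (l • Z + (1 - l) • W) :=
    lt_of_le_of_lt (le_max_left _ _) hcon
  have h2 : riskM A P V₀ V₁ W < riskM A P V₀ V₁ (l • Z + (1 - l) • W) :=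
    lt_of_le_of_lt (le_max_right _ _) hcon
  rw [riskM, sInf_lt_iff] at h1 h2
  obtain ⟨t, ht, htlt⟩ := h1
  obtain ⟨s, hs, hslt⟩ := h2
  obtain ⟨x, ⟨hxP, hxA⟩, rfl⟩ := ht
  obtain ⟨y, ⟨hyP, hyA⟩, rfl⟩ := hs
  set w : Fin N → ℝ := l • x + (1 - l) • y with hw
  have hwP : w ∈ P := hPconv hxP hyP hl0 (by linarith) (by ring)
  have hp : V₁ w - (l • V₁ x + (1 - l) • V₁ y) ∈ Xp := hV₁conc l hl0 hl1 x y
  have ha : l • (Z + V₁ x) + (1 - l) • (W + V₁ y) ∈ A :=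
    hAconv hxA hyA hl0 (by linarith) (by ring)
  have hfeas : (l • Z + (1 - l) • W) + V₁ w ∈ A := by
    have := hAmono _ ha _ hp
    have heq : l • (Z + V₁ x) + (1 - l) • (W + V₁ y) +
        (V₁ w - (l • V₁ x + (1 - l) • V₁ y)) = (l • Z + (1 - l) • W) + V₁ w := by
      simp only [smul_add]; abel
    rwa [heq] at this
  have hle : riskM A P V₀ V₁ (l • Z + (1 - l) • W) ≤ ((V₀ w : ℝ) : EReal) :=
    sInf_le ⟨w, ⟨hwP, hfeas⟩, rfl⟩
  have hmax : ((V₀ w : ℝ) : EReal) ≤ max ((V₀ x : ℝ) : EReal) ((V₀ y : ℝ) : EReal) := by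
    have := hV₀qconv l hl0 hl1 x y
    rcases max_cases (V₀ x) (V₀ y) with ⟨he, _⟩ | ⟨he, _⟩ <;> rw [he] at this
    · exact le_max_of_le_left (by exact_mod_cast this)
    · exact le_max_of_le_right (by exact_mod_cast this)
  have : riskM A P V₀ V₁ (l • Z + (1 - l) • W) <
      riskM A P V₀ V₁ (l • Z + (1 - l) • W) :=
    lt_of_le_of_lt (hle.trans hmax) (max_lt htlt hslt)
  exact lt_irrefl _ this
end
end

section
/- If 𝒜 and 𝒫 are convex, V₀ is convex, and V₁ is concave (V₁(λx + (1−λ)y) ≥ λV₁(x) + (1−λ)V₁(y) for all λ ∈ [0,1] and x, y), then ρ is convex: for all λ ∈ (0,1) and all X, Y ∈ 𝒳 such that {ρ(X), ρ(Y)} ≠ {−∞, +∞}, one has ρ(λX + (1−λ)Y) ≤ λρ(X) + (1−λ)ρ(Y) in the extended reals. -/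
open Topology Filter Set Pointwise

noncomputable section

theorem stmt13
    {X : Type*} [AddCommGroup X] [Module ℝ X] [TopologicalSpace X]
    [IsTopologicalAddGroup X] [ContinuousSMul ℝ X]
    (Xp : Set X) (hXp_cone : ∀ c : ℝ, 0 ≤ c → ∀ z ∈ Xp, c • z ∈ Xp)
    (hXp_conv : Convex ℝ Xp)
    {N : ℕ} (hN : 1 ≤ N)
    (P : Set (Fin N → ℝ)) (hP0 : (0 : Fin N → ℝ) ∈ P)
    (V₀ : (Fin N → ℝ) → ℝ) (hV₀0 : V₀ 0 = 0) (hV₀sp : ∀ x, -V₀ (-x) ≤ V₀ x)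
    (V₁ : (Fin N → ℝ) → X) (hV₁0 : V₁ 0 = 0) (hV₁sp : ∀ x, -V₁ (-x) - V₁ x ∈ Xp)
    (A : Set X) (hA0 : (0 : X) ∈ A) (hAmono : ∀ a ∈ A, ∀ p ∈ Xp, a + p ∈ A)
    (hAconv : Convex ℝ A) (hPconv : Convex ℝ P)
    (hV₀conv : ConvexOn ℝ Set.univ V₀)
    (hV₁conc : ∀ l : ℝ, 0 ≤ l → l ≤ 1 → ∀ x y,
      V₁ (l • x + (1 - l) • y) - (l • V₁ x + (1 - l) • V₁ y) ∈ Xp) :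
    ∀ l : ℝ, 0 < l → l < 1 → ∀ Z W : X,
      ¬(riskM A P V₀ V₁ Z = ⊥ ∧ riskM A P V₀ V₁ W = ⊤) →
      ¬(riskM A P V₀ V₁ Z = ⊤ ∧ riskM A P V₀ V₁ W = ⊥) →
      riskM A P V₀ V₁ (l • Z + (1 - l) • W) ≤
        (l : EReal) * riskM A P V₀ V₁ Z + ((1 - l : ℝ) : EReal) * riskM A P V₀ V₁ W := by
  intro l hl0 hl1 Z W hZW hWZ
  have hl0' : (0:ℝ) ≤ l := hl0.le
  have hl1' : (0:ℝ) ≤ 1 - l := by linarith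
  set SZ : Set EReal := (fun x => ((V₀ x : ℝ) : EReal)) '' {x | x ∈ P ∧ Z + V₁ x ∈ A} with hSZ
  set SW : Set EReal := (fun x => ((V₀ x : ℝ) : EReal)) '' {x | x ∈ P ∧ W + V₁ x ∈ A} with hSW
  have key : ∀ x, x ∈ P → Z + V₁ x ∈ A → ∀ y, y ∈ P → W + V₁ y ∈ A →
      riskM A P V₀ V₁ (l • Z + (1 - l) • W) ≤ ((l * V₀ x + (1 - l) * V₀ y : ℝ) : EReal) := by
    intro x hxP hxA y hyP hyA
    have hzP : l • x + (1-l) • y ∈ P := hPconv hxP hyP hl0' hl1' (by ring)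
    have hcomb : l • (Z + V₁ x) + (1-l) • (W + V₁ y) ∈ A := hAconv hxA hyA hl0' hl1' (by ring)
    have hp := hV₁conc l hl0' (by linarith) x y
    have hzA : (l • Z + (1-l) • W) + V₁ (l • x + (1-l) • y) ∈ A := by
      have h2 := hAmono _ hcomb _ hp
      convert h2 using 1
      module
    have hV0 : V₀ (l • x + (1-l) • y) ≤ l * V₀ x + (1-l) * V₀ y :=
      hV₀conv.2 (Set.mem_univ x) (Set.mem_univ y) hl0' hl1' (by ring)
    calc riskM A P V₀ V₁ (l • Z + (1 - l) • W)
        ≤ ((V₀ (l • x + (1-l) • y) : ℝ) : EReal) := sInf_le ⟨_, ⟨hzP, hzA⟩, rfl⟩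
      _ ≤ _ := by exact_mod_cast hV0
  -- helper facts
  have hcoe : ∀ a : EReal, a ≠ ⊥ → a ≠ ⊤ → ∃ r : ℝ, a = (r : EReal) := by
    intro a h1 h2
    induction a using EReal.rec with
    | bot => exact absurd rfl h1
    | coe r => exact ⟨r, rfl⟩
    | top => exact absurd rfl h2
  have hmulbot : ∀ (c : ℝ) (a : EReal), 0 < c → a ≠ ⊥ → (c : EReal) * a ≠ ⊥ := by
    intro c a hc ha
    induction a using EReal.rec with
    | bot => exact absurd rfl ha
    | coe r => rw [← EReal.coe_mul]; exact EReal.coe_ne_bot _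
    | top => rw [EReal.mul_top_of_pos (by exact_mod_cast hc)]; exact top_ne_bot
  by_cases hZtop : riskM A P V₀ V₁ Z = ⊤
  · have hWb : riskM A P V₀ V₁ W ≠ ⊥ := fun h => hWZ ⟨hZtop, h⟩
    rw [hZtop, EReal.mul_top_of_pos (by exact_mod_cast hl0),
      EReal.top_add_of_ne_bot (hmulbot _ _ (by linarith) hWb)]
    exact le_top
  by_cases hWtop : riskM A P V₀ V₁ W = ⊤
  · have hZb : riskM A P V₀ V₁ Z ≠ ⊥ := fun h => hZW ⟨h, hWtop⟩
    rw [hWtop, EReal.mul_top_of_pos (by exact_mod_cast (by linarith : (0:ℝ) < 1 - l)),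
      EReal.add_top_of_ne_bot (hmulbot _ _ hl0 hZb)]
    exact le_top
  -- both risk measures are < ⊤, so the feasibility sets are nonempty
  have hZne : ∃ x, x ∈ P ∧ Z + V₁ x ∈ A := by
    by_contra h
    apply hZtop
    have : {x | x ∈ P ∧ Z + V₁ x ∈ A} = ∅ := by
      ext x; simp only [Set.mem_setOf_eq, Set.mem_empty_iff_false, iff_false]
      exact fun hx => h ⟨x, hx⟩
    simp [riskM, this]
  have hWne : ∃ y, y ∈ P ∧ W + V₁ y ∈ A := by
    by_contra h
    apply hWtop
    have : {x | x ∈ P ∧ W + V₁ x ∈ A} = ∅ := by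
      ext x; simp only [Set.mem_setOf_eq, Set.mem_empty_iff_false, iff_false]
      exact fun hx => h ⟨x, hx⟩
    simp [riskM, this]
  obtain ⟨x0, hx0P, hx0A⟩ := hZne
  obtain ⟨y0, hy0P, hy0A⟩ := hWne
  -- helper : get feasible x with small V₀ value from sInf < bound
  have getZ : ∀ b : EReal, riskM A P V₀ V₁ Z < b → ∃ x, x ∈ P ∧ Z + V₁ x ∈ A ∧ ((V₀ x : ℝ) : EReal) < b := by
    intro b hb
    obtain ⟨a, ⟨x, hx, rfl⟩, ha⟩ := sInf_lt_iff.mp hb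
    exact ⟨x, hx.1, hx.2, ha⟩
  have getW : ∀ b : EReal, riskM A P V₀ V₁ W < b → ∃ y, y ∈ P ∧ W + V₁ y ∈ A ∧ ((V₀ y : ℝ) : EReal) < b := by
    intro b hb
    obtain ⟨a, ⟨y, hy, rfl⟩, ha⟩ := sInf_lt_iff.mp hb
    exact ⟨y, hy.1, hy.2, ha⟩
  have hbotcase : ∀ r : ℝ, riskM A P V₀ V₁ Z = ⊥ ∨ riskM A P V₀ V₁ W = ⊥ →
      riskM A P V₀ V₁ (l • Z + (1 - l) • W) ≤ ((r : ℝ) : EReal) := by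
    intro r hcase
    rcases hcase with h | h
    · have ht : riskM A P V₀ V₁ Z < (((r - (1-l) * V₀ y0) / l : ℝ) : EReal) := by
        rw [h]; exact EReal.bot_lt_coe _
      obtain ⟨x, hxP, hxA, hxv⟩ := getZ _ ht
      have hxv' : V₀ x < (r - (1-l) * V₀ y0) / l := by exact_mod_cast hxv
      have := key x hxP hxA y0 hy0P hy0A
      refine this.trans ?_
      apply EReal.coe_le_coe_iff.mpr
      have : l * V₀ x < l * ((r - (1-l) * V₀ y0) / l) := by
        exact (mul_lt_mul_iff_right₀ hl0).mpr hxv'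
      rw [mul_div_cancel₀ _ (ne_of_gt hl0)] at this
      linarith
    · have ht : riskM A P V₀ V₁ W < (((r - l * V₀ x0) / (1-l) : ℝ) : EReal) := by
        rw [h]; exact EReal.bot_lt_coe _
      obtain ⟨y, hyP, hyA, hyv⟩ := getW _ ht
      have hyv' : V₀ y < (r - l * V₀ x0) / (1-l) := by exact_mod_cast hyv
      have := key x0 hx0P hx0A y hyP hyA
      refine this.trans ?_
      apply EReal.coe_le_coe_iff.mpr
      have h1l : (0:ℝ) < 1 - l := by linarith
      have : (1-l) * V₀ y < (1-l) * ((r - l * V₀ x0) / (1-l)) := by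
        exact (mul_lt_mul_iff_right₀ h1l).mpr hyv'
      rw [mul_div_cancel₀ _ (ne_of_gt h1l)] at this
      linarith
  have hbot' : (riskM A P V₀ V₁ Z = ⊥ ∨ riskM A P V₀ V₁ W = ⊥) →
      riskM A P V₀ V₁ (l • Z + (1 - l) • W) = ⊥ := by
    intro hcase
    by_contra hne
    rcases hcoe _ hne (by
      intro htop
      rw [htop] at hbotcase
      exact absurd (hbotcase 0 hcase) (by simp [EReal.top_ne_coe]) ) with ⟨s, hs⟩
    have := hbotcase (s - 1) hcase
    rw [hs] at this
    have : s ≤ s - 1 := by exact_mod_cast this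
    linarith
  by_cases hZbot : riskM A P V₀ V₁ Z = ⊥
  · rw [hbot' (Or.inl hZbot)]; exact bot_le
  by_cases hWbot : riskM A P V₀ V₁ W = ⊥
  · rw [hbot' (Or.inr hWbot)]; exact bot_le
  -- both are real
  obtain ⟨rZ, hrZ⟩ := hcoe _ hZbot hZtop
  obtain ⟨rW, hrW⟩ := hcoe _ hWbot hWtop
  rw [hrZ, hrW, ← EReal.coe_mul, ← EReal.coe_mul, ← EReal.coe_add]
  set t : ℝ := l * rZ + (1-l) * rW with htdef
  have hstep : ∀ ε : ℝ, 0 < ε → riskM A P V₀ V₁ (l • Z + (1 - l) • W) ≤ ((t + ε : ℝ) : EReal) := by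
    intro ε hε
    have hZlt : riskM A P V₀ V₁ Z < ((rZ + ε : ℝ) : EReal) := by
      rw [hrZ]; exact_mod_cast (by linarith : rZ < rZ + ε)
    have hWlt : riskM A P V₀ V₁ W < ((rW + ε : ℝ) : EReal) := by
      rw [hrW]; exact_mod_cast (by linarith : rW < rW + ε)
    obtain ⟨x, hxP, hxA, hxv⟩ := getZ _ hZlt
    obtain ⟨y, hyP, hyA, hyv⟩ := getW _ hWlt
    have hxv' : V₀ x < rZ + ε := by exact_mod_cast hxv
    have hyv' : V₀ y < rW + ε := by exact_mod_cast hyv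
    refine (key x hxP hxA y hyP hyA).trans ?_
    apply EReal.coe_le_coe_iff.mpr
    have h1 : l * V₀ x ≤ l * (rZ + ε) := by nlinarith
    have h2 : (1-l) * V₀ y ≤ (1-l) * (rW + ε) := by nlinarith
    have : l * (rZ + ε) + (1-l) * (rW + ε) = t + ε := by rw [htdef]; ring
    linarith
  -- conclude from hstep
  by_contra hlt
  push_neg at hlt
  have hnb : riskM A P V₀ V₁ (l • Z + (1 - l) • W) ≠ ⊥ := by
    intro hb
    rw [hb] at hlt
    exact absurd hlt (by simp)
  have hnt : riskM A P V₀ V₁ (l • Z + (1 - l) • W) ≠ ⊤ := by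
    intro ht
    rw [ht] at hstep
    exact EReal.coe_ne_top (t + 1) (top_le_iff.mp (hstep 1 one_pos))
  obtain ⟨s, hs⟩ := hcoe _ hnb hnt
  rw [hs] at hlt hstep
  have hts : t < s := by exact_mod_cast hlt
  have h4 := hstep ((s - t)/2) (by linarith)
  have h5 : s ≤ t + (s - t)/2 := by exact_mod_cast h4
  linarith
end
end

section
/- If 𝒜 and 𝒫 are closed under addition, V₀ is subadditive (V₀(x+y) ≤ V₀(x) + V₀(y) for all x, y), and V₁ is superadditive (V₁(x+y) ≥ V₁(x) + V₁(y) for all x, y), then ρ is subadditive: for all X, Y ∈ 𝒳 such that {ρ(X), ρ(Y)} ≠ {−∞, +∞}, one has ρ(X + Y) ≤ ρ(X) + ρ(Y) in the extended reals. -/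
open Topology Filter Set Pointwise

noncomputable section

theorem stmt14
    {X : Type*} [AddCommGroup X] [Module ℝ X] [TopologicalSpace X]
    [IsTopologicalAddGroup X] [ContinuousSMul ℝ X]
    (Xp : Set X) (hXp_cone : ∀ c : ℝ, 0 ≤ c → ∀ z ∈ Xp, c • z ∈ Xp)
    (hXp_conv : Convex ℝ Xp)
    {N : ℕ} (hN : 1 ≤ N)
    (P : Set (Fin N → ℝ)) (hP0 : (0 : Fin N → ℝ) ∈ P)
    (V₀ : (Fin N → ℝ) → ℝ) (hV₀0 : V₀ 0 = 0) (hV₀sp : ∀ x, -V₀ (-x) ≤ V₀ x)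
    (V₁ : (Fin N → ℝ) → X) (hV₁0 : V₁ 0 = 0) (hV₁sp : ∀ x, -V₁ (-x) - V₁ x ∈ Xp)
    (A : Set X) (hA0 : (0 : X) ∈ A) (hAmono : ∀ a ∈ A, ∀ p ∈ Xp, a + p ∈ A)
    (hAadd : ∀ a ∈ A, ∀ b ∈ A, a + b ∈ A)
    (hPadd : ∀ x ∈ P, ∀ y ∈ P, x + y ∈ P)
    (hV₀sub : ∀ x y, V₀ (x + y) ≤ V₀ x + V₀ y)
    (hV₁super : ∀ x y, V₁ (x + y) - (V₁ x + V₁ y) ∈ Xp) :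
    ∀ Z W : X,
      ¬(riskM A P V₀ V₁ Z = ⊥ ∧ riskM A P V₀ V₁ W = ⊤) →
      ¬(riskM A P V₀ V₁ Z = ⊤ ∧ riskM A P V₀ V₁ W = ⊥) →
      riskM A P V₀ V₁ (Z + W) ≤ riskM A P V₀ V₁ Z + riskM A P V₀ V₁ W := by
  intro Z W h1 h2
  refine EReal.le_add_of_forall_gt ?_ ?_ ?_
  · rcases Classical.em (riskM A P V₀ V₁ Z = ⊥) with h | h
    · exact Or.inr (fun ht => h1 ⟨h, ht⟩)
    · exact Or.inl h
  · rcases Classical.em (riskM A P V₀ V₁ Z = ⊤) with h | h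
    · exact Or.inr (fun hb => h2 ⟨h, hb⟩)
    · exact Or.inl h
  · intro a' ha' b' hb'
    rw [gt_iff_lt, riskM, sInf_lt_iff] at ha' hb'
    obtain ⟨s, hs, hsa⟩ := ha'
    obtain ⟨t, ht, htb⟩ := hb'
    obtain ⟨x, ⟨hxP, hxA⟩, rfl⟩ := hs
    obtain ⟨y, ⟨hyP, hyA⟩, rfl⟩ := ht
    have hmem : ((V₀ (x + y) : ℝ) : EReal) ∈ (fun x => ((V₀ x : ℝ) : EReal)) ''
        {x | x ∈ P ∧ Z + W + V₁ x ∈ A} := by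
      refine ⟨x + y, ⟨hPadd x hxP y hyP, ?_⟩, rfl⟩
      have hsum : (Z + V₁ x) + (W + V₁ y) ∈ A := hAadd _ hxA _ hyA
      have := hAmono _ hsum _ (hV₁super x y)
      have heq : (Z + V₁ x) + (W + V₁ y) + (V₁ (x + y) - (V₁ x + V₁ y))
          = Z + W + V₁ (x + y) := by abel
      rwa [heq] at this
    rw [riskM]
    calc sInf ((fun x => ((V₀ x : ℝ) : EReal)) '' {x | x ∈ P ∧ Z + W + V₁ x ∈ A})
        ≤ ((V₀ (x + y) : ℝ) : EReal) := sInf_le hmem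
      _ ≤ ((V₀ x + V₀ y : ℝ) : EReal) := by exact_mod_cast hV₀sub x y
      _ = ((V₀ x : ℝ) : EReal) + ((V₀ y : ℝ) : EReal) := EReal.coe_add _ _
      _ ≤ a' + b' := add_le_add hsa.le htb.le
end
end

section
/- Assume that 𝒫 is convex, V₀ is convex, and V₁ is concave (V₁(λx + (1−λ)y) ≥ λV₁(x) + (1−λ)V₁(y) for all λ ∈ [0,1] and x, y). For each Y ∈ 𝒜 define 𝒜_Y = {Z ∈ 𝒳 : Z ≥ Y} and ρ_Y(X) = inf{V₀(x) : x ∈ 𝒫, X + V₁(x) ∈ 𝒜_Y} (inf ∅ = +∞). Then each ρ_Y is convex (for all λ ∈ (0,1) and X, X' with {ρ_Y(X), ρ_Y(X')} ≠ {−∞, +∞}, ρ_Y(λX + (1−λ)X') ≤ λρ_Y(X) + (1−λ)ρ_Y(X')), and for every X ∈ 𝒳 one has ρ(X) = inf over Y ∈ 𝒜 of ρ_Y(X). -/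
open Topology Filter Set Pointwise

noncomputable section

/-- The convex risk measure `ρ_Y` associated with the acceptance set `𝒜_Y = {Z : Z ≥ Y}`. -/
def riskMY {X : Type*} [AddCommGroup X] {N : ℕ} (Xp : Set X) (P : Set (Fin N → ℝ))
    (V₀ : (Fin N → ℝ) → ℝ) (V₁ : (Fin N → ℝ) → X) (Y : X) (Z : X) : EReal :=
  sInf ((fun x => ((V₀ x : ℝ) : EReal)) '' {x | x ∈ P ∧ (Z + V₁ x) - Y ∈ Xp})


lemma ereal_mul_ne_bot_of_pos {m : ℝ} (hm : 0 < m) {b : EReal} (hb : b ≠ ⊥) :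
    (m : EReal) * b ≠ ⊥ := by
  induction b using EReal.rec with
  | bot => exact absurd rfl hb
  | coe r => rw [← EReal.coe_mul]; exact EReal.coe_ne_bot _
  | top => rw [EReal.coe_mul_top_of_pos hm]; exact top_ne_bot

lemma ereal_inf_ne_top {S : Set ℝ} (hS : S.Nonempty) :
    sInf ((fun r : ℝ => (r : EReal)) '' S) ≠ ⊤ := by
  obtain ⟨v, hv⟩ := hS
  intro h
  have : sInf ((fun r : ℝ => (r : EReal)) '' S) ≤ ((v : ℝ) : EReal) :=
    sInf_le (Set.mem_image_of_mem _ hv)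
  rw [h, top_le_iff] at this
  exact EReal.coe_ne_top v this

lemma ereal_comb_le {l : ℝ} (hl : 0 < l) (hl1 : l < 1) {S T : Set ℝ}
    (hS : S.Nonempty) (hT : T.Nonempty) {c : EReal}
    (h : ∀ v ∈ S, ∀ w ∈ T, c ≤ ((l * v + (1 - l) * w : ℝ) : EReal)) :
    c ≤ (l : EReal) * sInf ((fun r : ℝ => (r : EReal)) '' S) +
        ((1 - l : ℝ) : EReal) * sInf ((fun r : ℝ => (r : EReal)) '' T) := by
  have haT := ereal_inf_ne_top hS
  have hbT := ereal_inf_ne_top hT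
  generalize hA : sInf ((fun r : ℝ => (r : EReal)) '' S) = a at *
  generalize hB : sInf ((fun r : ℝ => (r : EReal)) '' T) = b at *
  have hl1' : 0 < 1 - l := by linarith
  have key : ∀ r : ℝ, (l : EReal) * a + ((1 - l : ℝ) : EReal) * b < (r : EReal) →
      c ≤ (r : EReal) := by
    intro r hr
    obtain ⟨v₀, hv₀⟩ := hS
    obtain ⟨w₀, hw₀⟩ := hT
    have claim : ∃ v ∈ S, ∃ w ∈ T, l * v + (1 - l) * w ≤ r := by
      by_cases hab : a = ⊥
      · -- pick w₀, find small v
        have : a < ((r - (1 - l) * w₀) / l : ℝ) := by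
          rw [hab]; exact bot_lt_iff_ne_bot.2 (EReal.coe_ne_bot _)
        rw [← hA, sInf_lt_iff] at this
        obtain ⟨e, ⟨v, hv, rfl⟩, hlt⟩ := this
        rw [EReal.coe_lt_coe_iff] at hlt
        refine ⟨v, hv, w₀, hw₀, ?_⟩
        have : l * v < l * ((r - (1 - l) * w₀) / l) := by
          exact mul_lt_mul_of_pos_left hlt hl
        rw [mul_div_cancel₀ _ hl.ne'] at this
        linarith
      · by_cases hbb : b = ⊥
        · have : b < ((r - l * v₀) / (1 - l) : ℝ) := by
            rw [hbb]; exact bot_lt_iff_ne_bot.2 (EReal.coe_ne_bot _)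
          rw [← hB, sInf_lt_iff] at this
          obtain ⟨e, ⟨w, hw, rfl⟩, hlt⟩ := this
          rw [EReal.coe_lt_coe_iff] at hlt
          refine ⟨v₀, hv₀, w, hw, ?_⟩
          have : (1 - l) * w < (1 - l) * ((r - l * v₀) / (1 - l)) :=
            mul_lt_mul_of_pos_left hlt hl1'
          rw [mul_div_cancel₀ _ hl1'.ne'] at this
          linarith
        · -- both real
          obtain ⟨a', rfl⟩ : ∃ a' : ℝ, a = (a' : EReal) := by
            lift a to ℝ using ⟨haT, hab⟩
            exact ⟨a, rfl⟩
          obtain ⟨b', rfl⟩ : ∃ b' : ℝ, b = (b' : EReal) := by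
            lift b to ℝ using ⟨hbT, hbb⟩
            exact ⟨b, rfl⟩
          rw [← EReal.coe_mul, ← EReal.coe_mul, ← EReal.coe_add,
            EReal.coe_lt_coe_iff] at hr
          set ε := r - (l * a' + (1 - l) * b') with hε
          have hεpos : 0 < ε := by simpa [hε] using sub_pos.2 hr
          have h1 : (a' : EReal) < ((a' + ε / (2 * l) : ℝ) : EReal) := by
            rw [EReal.coe_lt_coe_iff]
            have : 0 < ε / (2 * l) := div_pos hεpos (by linarith)
            linarith
          rw [← hA, sInf_lt_iff] at h1
          obtain ⟨e, ⟨v, hv, rfl⟩, hlt1⟩ := h1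
          rw [EReal.coe_lt_coe_iff] at hlt1
          have h2 : (b' : EReal) < ((b' + ε / (2 * (1 - l)) : ℝ) : EReal) := by
            rw [EReal.coe_lt_coe_iff]
            have : 0 < ε / (2 * (1 - l)) := div_pos hεpos (by linarith)
            linarith
          rw [← hB, sInf_lt_iff] at h2
          obtain ⟨e, ⟨w, hw, rfl⟩, hlt2⟩ := h2
          rw [EReal.coe_lt_coe_iff] at hlt2
          refine ⟨v, hv, w, hw, ?_⟩
          have c1 : l * (ε / (2 * l)) = ε / 2 := by field_simp
          have c2 : (1 - l) * (ε / (2 * (1 - l))) = ε / 2 := by field_simp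
          have e1 : l * v < l * a' + ε / 2 := by
            have := mul_lt_mul_of_pos_left hlt1 hl
            rw [mul_add, c1] at this; linarith
          have e2 : (1 - l) * w < (1 - l) * b' + ε / 2 := by
            have := mul_lt_mul_of_pos_left hlt2 hl1'
            rw [mul_add, c2] at this; linarith
          linarith
    obtain ⟨v, hv, w, hw, hle⟩ := claim
    exact le_trans (h v hv w hw) (EReal.coe_le_coe_iff.2 hle)
  refine le_of_forall_gt_imp_ge_of_dense fun e he => ?_
  induction e using EReal.rec with
  | bot => exact absurd he (by simp)
  | coe r => exact key r he
  | top => exact le_top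

theorem stmt15
    {X : Type*} [AddCommGroup X] [Module ℝ X] [TopologicalSpace X]
    [IsTopologicalAddGroup X] [ContinuousSMul ℝ X]
    (Xp : Set X) (hXp_cone : ∀ c : ℝ, 0 ≤ c → ∀ z ∈ Xp, c • z ∈ Xp)
    (hXp_conv : Convex ℝ Xp)
    {N : ℕ} (hN : 1 ≤ N)
    (P : Set (Fin N → ℝ)) (hP0 : (0 : Fin N → ℝ) ∈ P)
    (V₀ : (Fin N → ℝ) → ℝ) (hV₀0 : V₀ 0 = 0) (hV₀sp : ∀ x, -V₀ (-x) ≤ V₀ x)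
    (V₁ : (Fin N → ℝ) → X) (hV₁0 : V₁ 0 = 0) (hV₁sp : ∀ x, -V₁ (-x) - V₁ x ∈ Xp)
    (A : Set X) (hA0 : (0 : X) ∈ A) (hAmono : ∀ a ∈ A, ∀ p ∈ Xp, a + p ∈ A)
    (hPconv : Convex ℝ P)
    (hV₀conv : ConvexOn ℝ Set.univ V₀)
    (hV₁conc : ∀ l : ℝ, 0 ≤ l → l ≤ 1 → ∀ x y,
      V₁ (l • x + (1 - l) • y) - (l • V₁ x + (1 - l) • V₁ y) ∈ Xp) :
    (∀ Y ∈ A, ∀ l : ℝ, 0 < l → l < 1 → ∀ Z W : X,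
      ¬(riskMY Xp P V₀ V₁ Y Z = ⊥ ∧ riskMY Xp P V₀ V₁ Y W = ⊤) →
      ¬(riskMY Xp P V₀ V₁ Y Z = ⊤ ∧ riskMY Xp P V₀ V₁ Y W = ⊥) →
      riskMY Xp P V₀ V₁ Y (l • Z + (1 - l) • W) ≤
        (l : EReal) * riskMY Xp P V₀ V₁ Y Z +
          ((1 - l : ℝ) : EReal) * riskMY Xp P V₀ V₁ Y W) ∧
    ∀ Z : X, riskM A P V₀ V₁ Z = ⨅ Y ∈ A, riskMY Xp P V₀ V₁ Y Z := by
  have h0Xp : (0 : X) ∈ Xp := by simpa [hV₁0] using hV₁sp 0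
  have hXp_add : ∀ p ∈ Xp, ∀ q ∈ Xp, p + q ∈ Xp := by
    intro p hp q hq
    have h := hXp_conv hp hq (by norm_num : (0:ℝ) ≤ (1/2:ℝ))
      (by norm_num : (0:ℝ) ≤ (1/2:ℝ)) (by norm_num)
    have h2 := hXp_cone 2 (by norm_num) _ h
    have : (2:ℝ) • ((1/2:ℝ) • p + (1/2:ℝ) • q) = p + q := by
      rw [smul_add, smul_smul, smul_smul]; norm_num
    rwa [this] at h2
  constructor
  · intro Y hY l hl hl1 Z W hnb hnt
    have hl1' : 0 < 1 - l := by linarith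
    by_cases hZtop : riskMY Xp P V₀ V₁ Y Z = ⊤
    · have hWnb : riskMY Xp P V₀ V₁ Y W ≠ ⊥ := fun h => hnt ⟨hZtop, h⟩
      rw [hZtop, EReal.coe_mul_top_of_pos hl,
        EReal.top_add_of_ne_bot (ereal_mul_ne_bot_of_pos hl1' hWnb)]
      exact le_top
    by_cases hWtop : riskMY Xp P V₀ V₁ Y W = ⊤
    · have hZnb : riskMY Xp P V₀ V₁ Y Z ≠ ⊥ := fun h => hnb ⟨h, hWtop⟩
      rw [hWtop, EReal.coe_mul_top_of_pos hl1',
        EReal.add_top_of_ne_bot (ereal_mul_ne_bot_of_pos hl hZnb)]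
      exact le_top
    -- both feasible sets nonempty
    have hfeasZ : {x | x ∈ P ∧ (Z + V₁ x) - Y ∈ Xp}.Nonempty := by
      by_contra h
      rw [Set.not_nonempty_iff_eq_empty] at h
      exact hZtop (by simp [riskMY, h])
    have hfeasW : {x | x ∈ P ∧ (W + V₁ x) - Y ∈ Xp}.Nonempty := by
      by_contra h
      rw [Set.not_nonempty_iff_eq_empty] at h
      exact hWtop (by simp [riskMY, h])
    have himg : ∀ (U : X) (s : Set (Fin N → ℝ)),
        (fun x => ((V₀ x : ℝ) : EReal)) '' s = (fun r : ℝ => (r : EReal)) '' (V₀ '' s) := by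
      intro U s; rw [Set.image_image]
    rw [riskMY, riskMY, riskMY, himg Z, himg Z, himg Z]
    refine ereal_comb_le hl hl1 (hfeasZ.image V₀) (hfeasW.image V₀) ?_
    rintro v ⟨x, hx, rfl⟩ w ⟨y, hy, rfl⟩
    -- combination portfolio
    have huP : l • x + (1 - l) • y ∈ P :=
      hPconv hx.1 hy.1 hl.le hl1'.le (by ring)
    have hufeas : ((l • Z + (1 - l) • W) + V₁ (l • x + (1 - l) • y)) - Y ∈ Xp := by
      have q1 := hXp_cone l hl.le _ hx.2
      have q2 := hXp_cone (1 - l) hl1'.le _ hy.2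
      have q3 := hV₁conc l hl.le (by linarith) x y
      have hsum := hXp_add _ (hXp_add _ q1 _ q2) _ q3
      have heq : l • ((Z + V₁ x) - Y) + (1 - l) • ((W + V₁ y) - Y) +
          (V₁ (l • x + (1 - l) • y) - (l • V₁ x + (1 - l) • V₁ y)) =
          ((l • Z + (1 - l) • W) + V₁ (l • x + (1 - l) • y)) - Y := by
        module
      rwa [heq] at hsum
    have hmem : ((V₀ (l • x + (1 - l) • y) : ℝ) : EReal) ∈
        (fun r : ℝ => (r : EReal)) ''
          (V₀ '' {x_1 | x_1 ∈ P ∧ (l • Z + (1 - l) • W + V₁ x_1) - Y ∈ Xp}) :=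
      ⟨V₀ (l • x + (1 - l) • y), ⟨_, ⟨huP, hufeas⟩, rfl⟩, rfl⟩
    refine le_trans (sInf_le hmem) (EReal.coe_le_coe_iff.2 ?_)
    have := hV₀conv.2 (Set.mem_univ x) (Set.mem_univ y) hl.le hl1'.le (by ring)
    simpa [smul_eq_mul] using this
  · intro Z
    refine le_antisymm (le_iInf₂ fun Y hY => ?_) (le_sInf ?_)
    · refine sInf_le_sInf (Set.image_mono ?_)
      rintro x ⟨hxP, hfeas⟩
      refine ⟨hxP, ?_⟩
      have := hAmono Y hY _ hfeas
      simpa using this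
    · rintro e ⟨x, ⟨hxP, hxA⟩, rfl⟩
      refine le_trans (iInf₂_le (Z + V₁ x) hxA) ?_
      refine sInf_le ⟨x, ⟨hxP, ?_⟩, rfl⟩
      simp [h0Xp]
end
end

section
/- Let z ∈ 𝒫 be such that 𝒫 + span({z}) ⊆ 𝒫, and suppose V₀ and V₁ are additive along z, i.e. V₀(x + λz) = V₀(x) + λV₀(z) and V₁(x + λz) = V₁(x) + λV₁(z) for every x ∈ 𝒫 and λ ∈ ℝ. Then ρ is price additive along z: ρ(X + λV₁(z)) = ρ(X) − λV₀(z) for every X ∈ 𝒳 and λ ∈ ℝ (in the extended reals, where subtracting a real number from ±∞ gives ±∞). -/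
open Topology Filter Set Pointwise

noncomputable section

/-- Subtracting a real constant is an order isomorphism on `EReal`. -/
def ERealSubIso (c : ℝ) : EReal ≃o EReal where
  toFun x := x - c
  invFun x := x + c
  left_inv x := EReal.sub_add_cancel
  right_inv x := EReal.add_sub_cancel_right
  map_rel_iff' := by
    intro a b
    constructor
    · intro h
      have := add_le_add_left h (c : EReal)
      simpa [EReal.sub_add_cancel] using this
    · intro h
      exact add_le_add_left h _

lemma sInf_sub_const (S : Set EReal) (c : ℝ) :
    sInf ((fun x => x - (c : EReal)) '' S) = sInf S - c := by
  have := (ERealSubIso c).map_sInf S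
  simp only [ERealSubIso, RelIso.coe_fn_mk, Equiv.coe_fn_mk] at this
  rw [show ((fun x => x - (c:EReal)) '' S) = (ERealSubIso c) '' S from rfl, sInf_image]
  exact this.symm

theorem stmt16
    {X : Type*} [AddCommGroup X] [Module ℝ X] [TopologicalSpace X]
    [IsTopologicalAddGroup X] [ContinuousSMul ℝ X]
    (Xp : Set X) (hXp_cone : ∀ c : ℝ, 0 ≤ c → ∀ z ∈ Xp, c • z ∈ Xp)
    (hXp_conv : Convex ℝ Xp)
    {N : ℕ} (hN : 1 ≤ N)
    (P : Set (Fin N → ℝ)) (hP0 : (0 : Fin N → ℝ) ∈ P)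
    (V₀ : (Fin N → ℝ) → ℝ) (hV₀0 : V₀ 0 = 0) (hV₀sp : ∀ x, -V₀ (-x) ≤ V₀ x)
    (V₁ : (Fin N → ℝ) → X) (hV₁0 : V₁ 0 = 0) (hV₁sp : ∀ x, -V₁ (-x) - V₁ x ∈ Xp)
    (A : Set X) (hA0 : (0 : X) ∈ A) (hAmono : ∀ a ∈ A, ∀ p ∈ Xp, a + p ∈ A)
    (z : Fin N → ℝ) (hz : z ∈ P)
    (hPz : P + ((Submodule.span ℝ {z} : Submodule ℝ (Fin N → ℝ)) : Set (Fin N → ℝ)) ⊆ P)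
    (hV₀add : ∀ x ∈ P, ∀ t : ℝ, V₀ (x + t • z) = V₀ x + t * V₀ z)
    (hV₁add : ∀ x ∈ P, ∀ t : ℝ, V₁ (x + t • z) = V₁ x + t • V₁ z) :
    ∀ Z : X, ∀ t : ℝ,
      riskM A P V₀ V₁ (Z + t • V₁ z) = riskM A P V₀ V₁ Z - ((t * V₀ z : ℝ) : EReal) := by
  intro Z t
  have hmem : ∀ s : ℝ, s • z ∈ ((Submodule.span ℝ {z} : Submodule ℝ (Fin N → ℝ)) : Set (Fin N → ℝ)) :=
    fun s => Submodule.smul_mem _ s (Submodule.mem_span_singleton_self z)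
  unfold riskM
  rw [← sInf_sub_const]
  congr 1
  ext r
  constructor
  · rintro ⟨x, ⟨hxP, hxA⟩, rfl⟩
    refine ⟨((V₀ (x + t • z) : ℝ) : EReal), ⟨x + t • z, ⟨hPz (Set.add_mem_add hxP (hmem t)), ?_⟩, rfl⟩, ?_⟩
    · rw [hV₁add x hxP t]
      have : Z + (V₁ x + t • V₁ z) = Z + t • V₁ z + V₁ x := by abel
      rw [this]; exact hxA
    · rw [hV₀add x hxP t]
      rw [show ((V₀ x + t * V₀ z : ℝ) : EReal) = ((V₀ x : ℝ) : EReal) + ((t * V₀ z : ℝ) : EReal) from EReal.coe_add _ _]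
      exact EReal.add_sub_cancel_right
  · rintro ⟨r', ⟨y, ⟨hyP, hyA⟩, rfl⟩, rfl⟩
    refine ⟨y + (-t) • z, ⟨hPz (Set.add_mem_add hyP (hmem (-t))), ?_⟩, ?_⟩
    · rw [hV₁add y hyP (-t)]
      have : Z + t • V₁ z + (V₁ y + (-t) • V₁ z) = Z + V₁ y := by
        rw [neg_smul]; abel
      rw [this]; exact hyA
    · show ((V₀ (y + (-t) • z) : ℝ) : EReal) = ((V₀ y : ℝ) : EReal) - ((t * V₀ z : ℝ) : EReal)
      rw [hV₀add y hyP (-t)]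
      rw [show ((V₀ y + (-t) * V₀ z : ℝ) : EReal) = ((V₀ y : ℝ) : EReal) + (((-t) * V₀ z : ℝ) : EReal) from EReal.coe_add _ _]
      rw [show ((-t) * V₀ z : ℝ) = -(t * V₀ z) by ring]
      rw [EReal.coe_neg]
      rw [sub_eq_add_neg]
end
end

section
/- Let z ∈ 𝒫 be such that 𝒫 + span({z}) ⊆ 𝒫, suppose V₀ and V₁ are additive along z (V₀(x + λz) = V₀(x) + λV₀(z) and V₁(x + λz) = V₁(x) + λV₁(z) for every x ∈ 𝒫 and λ ∈ ℝ), and assume V₀(z) > 0. Define 𝒱 = {V₁(x) : x ∈ 𝒫, V₀(x) = 0}. Then for every X ∈ 𝒳, ρ(X) = inf{λV₀(z) : λ ∈ ℝ, X + λV₁(z) ∈ 𝒜 − 𝒱}, where 𝒜 − 𝒱 = {A − W : A ∈ 𝒜, W ∈ 𝒱}. -/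
open Topology Filter Set Pointwise

noncomputable section

theorem stmt17
    {X : Type*} [AddCommGroup X] [Module ℝ X] [TopologicalSpace X]
    [IsTopologicalAddGroup X] [ContinuousSMul ℝ X]
    (Xp : Set X) (hXp_cone : ∀ c : ℝ, 0 ≤ c → ∀ z ∈ Xp, c • z ∈ Xp)
    (hXp_conv : Convex ℝ Xp)
    {N : ℕ} (hN : 1 ≤ N)
    (P : Set (Fin N → ℝ)) (hP0 : (0 : Fin N → ℝ) ∈ P)
    (V₀ : (Fin N → ℝ) → ℝ) (hV₀0 : V₀ 0 = 0) (hV₀sp : ∀ x, -V₀ (-x) ≤ V₀ x)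
    (V₁ : (Fin N → ℝ) → X) (hV₁0 : V₁ 0 = 0) (hV₁sp : ∀ x, -V₁ (-x) - V₁ x ∈ Xp)
    (A : Set X) (hA0 : (0 : X) ∈ A) (hAmono : ∀ a ∈ A, ∀ p ∈ Xp, a + p ∈ A)
    (z : Fin N → ℝ) (hz : z ∈ P)
    (hPz : P + ((Submodule.span ℝ {z} : Submodule ℝ (Fin N → ℝ)) : Set (Fin N → ℝ)) ⊆ P)
    (hV₀add : ∀ x ∈ P, ∀ t : ℝ, V₀ (x + t • z) = V₀ x + t * V₀ z)
    (hV₁add : ∀ x ∈ P, ∀ t : ℝ, V₁ (x + t • z) = V₁ x + t • V₁ z)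
    (hz0 : 0 < V₀ z) :
    ∀ Z : X, riskM A P V₀ V₁ Z =
      sInf ((fun t : ℝ => ((t * V₀ z : ℝ) : EReal)) ''
        {t : ℝ | ∃ a ∈ A, ∃ x ∈ P, V₀ x = 0 ∧ Z + t • V₁ z = a - V₁ x}) := by
  intro Z
  unfold riskM
  congr 1
  ext v
  simp only [Set.mem_image, Set.mem_setOf_eq]
  constructor
  · rintro ⟨x, ⟨hxP, hxA⟩, rfl⟩
    refine ⟨V₀ x / V₀ z, ⟨Z + V₁ x, hxA, x + (-(V₀ x / V₀ z)) • z,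
      hPz (Set.add_mem_add hxP (Submodule.smul_mem _ _ (Submodule.mem_span_singleton_self z))),
      ?_, ?_⟩, ?_⟩
    · rw [hV₀add x hxP]; field_simp; ring
    · rw [hV₁add x hxP, neg_smul]; abel
    · congr 1; field_simp
  · rintro ⟨t, ⟨a, haA, x, hxP, hx0, heq⟩, rfl⟩
    refine ⟨x + t • z,
      ⟨hPz (Set.add_mem_add hxP (Submodule.smul_mem _ _ (Submodule.mem_span_singleton_self z))),
        ?_⟩, ?_⟩
    · rw [hV₁add x hxP]
      have ha : Z + (V₁ x + t • V₁ z) = a := by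
        rw [eq_sub_iff_add_eq] at heq
        rw [← heq]; abel
      rw [ha]; exact haA
    · congr 1
      rw [hV₀add x hxP, hx0, zero_add]
end
end

section
/- The following implications hold: (a) if ℒ = {0}, then there exists no scalable acceptable deal; (b) if V₁(x) = 0 implies x = 0 and there exists no scalable acceptable deal, then ℒ = {0}; (c) if 𝒜^∞ ∩ (−𝒜^∞) = {0} and ℒ is a linear subspace of ℝ^N, then there exists no scalable acceptable deal. -/
open Topology Filter Set Pointwise

noncomputable section

lemma zero_mem_asymCone {E : Type*} [AddCommMonoid E] [SMulZeroClass ℝ E] [TopologicalSpace E]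
    {C : Set E} (h : (0 : E) ∈ C) : (0 : E) ∈ asymCone C := by
  intro U hU ε hε
  exact ⟨0, h, 0, le_refl 0, hε, by simpa using mem_of_mem_nhds hU⟩

lemma asymCone_add_Xp {X : Type*} [AddCommGroup X] [Module ℝ X] [TopologicalSpace X]
    [IsTopologicalAddGroup X]
    (Xp : Set X) (hXp_cone : ∀ c : ℝ, 0 ≤ c → ∀ z ∈ Xp, c • z ∈ Xp)
    (A : Set X) (hA0 : (0 : X) ∈ A) (hAmono : ∀ a ∈ A, ∀ p ∈ Xp, a + p ∈ A)
    {a : X} (ha : a ∈ asymCone A) {p : X} (hp : p ∈ Xp) : a + p ∈ asymCone A := by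
  intro U hU ε hε
  have hU' : (fun z => z + p) ⁻¹' U ∈ 𝓝 a :=
    (continuous_id.add continuous_const).continuousAt.preimage_mem_nhds (by simpa using hU)
  obtain ⟨c, hc, l, hl0, hlε, hlc⟩ := ha _ hU' ε hε
  rcases eq_or_lt_of_le hl0 with h0 | h0
  · -- l = 0 : then p ∈ U; realize p as (ε/2) • ((ε/2)⁻¹ • p)
    have hpU : p ∈ U := by simpa [← h0] using hlc
    have hε2 : (0:ℝ) < ε / 2 := by linarith
    refine ⟨(ε/2)⁻¹ • p, ?_, ε/2, le_of_lt hε2, by linarith, ?_⟩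
    · have := hAmono 0 hA0 _ (hXp_cone (ε/2)⁻¹ (by positivity) p hp)
      simpa using this
    · rw [smul_inv_smul₀ (ne_of_gt hε2)]
      exact hpU
  · refine ⟨c + l⁻¹ • p, hAmono c hc _ (hXp_cone l⁻¹ (by positivity) p hp), l, hl0, hlε, ?_⟩
    rw [smul_add, smul_inv_smul₀ (ne_of_gt h0)]
    exact hlc

theorem stmt18
    {X : Type*} [AddCommGroup X] [Module ℝ X] [TopologicalSpace X]
    [IsTopologicalAddGroup X] [ContinuousSMul ℝ X]
    (Xp : Set X) (hXp_cone : ∀ c : ℝ, 0 ≤ c → ∀ z ∈ Xp, c • z ∈ Xp)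
    (hXp_conv : Convex ℝ Xp)
    {N : ℕ} (hN : 1 ≤ N)
    (P : Set (Fin N → ℝ)) (hP0 : (0 : Fin N → ℝ) ∈ P)
    (V₀ : (Fin N → ℝ) → ℝ) (hV₀0 : V₀ 0 = 0) (hV₀sp : ∀ x, -V₀ (-x) ≤ V₀ x)
    (V₁ : (Fin N → ℝ) → X) (hV₁0 : V₁ 0 = 0) (hV₁sp : ∀ x, -V₁ (-x) - V₁ x ∈ Xp)
    (A : Set X) (hA0 : (0 : X) ∈ A) (hAmono : ∀ a ∈ A, ∀ p ∈ Xp, a + p ∈ A) :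
    (Lset A P V₀ V₁ = {0} → ¬∃ x, x ∈ Lset A P V₀ V₁ ∧ V₁ x ≠ 0) ∧
    ((∀ x, V₁ x = 0 → x = 0) → (¬∃ x, x ∈ Lset A P V₀ V₁ ∧ V₁ x ≠ 0) →
      Lset A P V₀ V₁ = {0}) ∧
    (asymCone A ∩ (-(asymCone A)) = {0} →
      (∃ S : Submodule ℝ (Fin N → ℝ), (S : Set (Fin N → ℝ)) = Lset A P V₀ V₁) →
      ¬∃ x, x ∈ Lset A P V₀ V₁ ∧ V₁ x ≠ 0) := by
  have hL0 : (0 : Fin N → ℝ) ∈ Lset A P V₀ V₁ := by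
    refine ⟨zero_mem_asymCone hP0, ?_, ?_⟩
    · have h : ((0 : Fin N → ℝ), (0 : ℝ)) ∈ epigraph V₀ := by
        simp [epigraph, hV₀0]
      exact zero_mem_asymCone (E := (Fin N → ℝ) × ℝ) h
    · rw [hV₁0]; exact zero_mem_asymCone hA0
  refine ⟨?_, ?_, ?_⟩
  · rintro hL ⟨x, hx, hne⟩
    rw [hL, mem_singleton_iff] at hx
    subst hx
    exact hne hV₁0
  · intro hinj hno
    ext x
    simp only [mem_singleton_iff]
    constructor
    · intro hx
      by_contra hxne
      exact hno ⟨x, hx, fun h => hxne (hinj x h)⟩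
    · rintro rfl; exact hL0
  · rintro hpoint ⟨S, hS⟩ ⟨x, hx, hne⟩
    have hxm : -x ∈ Lset A P V₀ V₁ := by
      rw [← hS] at hx ⊢
      exact S.neg_mem hx
    have h1 : V₁ x ∈ asymCone A := hx.2.2
    have h2 : V₁ (-x) ∈ asymCone A := hxm.2.2
    have h3 : -V₁ x ∈ asymCone A := by
      have := asymCone_add_Xp Xp hXp_cone A hA0 hAmono h2 (hV₁sp x)
      convert this using 1
      abel
    have hmem : V₁ x ∈ asymCone A ∩ (-(asymCone A)) := ⟨h1, Set.mem_neg.2 h3⟩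
    rw [hpoint, mem_singleton_iff] at hmem
    exact hne hmem
end
end
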